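/- arXiv:2212.07111 — 5 statements merged into one kernel-verified Lean document; each statement's English description precedes it below -/
import Mathlib

section
/- Let G be a group, φ an automorphism of G of finite order dividing m, and let Ĝ = G ⋊_φ ⟨t⟩ where t has order m and t⁻¹gt = φ(g). For elements tᵃu and tᵇv of Ĝ with u, v ∈ G and 0 ≤ a, b ≤ m−1, the elements tᵃu and tᵇv are conjugate in Ĝ if and only if a = b and there exists an integer k with 0 ≤ k ≤ m−1 such that v is φᵃ-twisted conjugate to φᵏ(u) in G. -/
/-- Conjugacy in a finite cyclic extension `Ĝ = G ⋊_φ ⟨t⟩` (with `t^m = 1`,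
`t⁻¹ g t = φ(g)`, and unique normal forms `t^l · v`) corresponds to twisted
conjugacy in `G`. -/
theorem conj_in_extension_iff_twisted_conj
    {G Ghat : Type*} [Group G] [Group Ghat]
    (m : ℕ) (hm : 0 < m) (φ : MulAut G) (hφ : φ ^ m = 1)
    (ι : G →* Ghat) (t : Ghat)
    (ht : t ^ m = 1)
    (hconj : ∀ g : G, t⁻¹ * ι g * t = ι (φ g))
    (hnf : ∀ a b : ℕ, a < m → b < m → ∀ u v : G,
      t ^ a * ι u = t ^ b * ι v → a = b ∧ u = v)
    (hsurj : ∀ x : Ghat, ∃ l : ℕ, l < m ∧ ∃ w : G, x = t ^ l * ι w)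
    (u v : G) (a b : ℕ) (ha : a < m) (hb : b < m) :
    IsConj (t ^ a * ι u) (t ^ b * ι v) ↔
      a = b ∧ ∃ k : ℕ, k < m ∧ ∃ x : G,
        v = ((φ ^ a) x)⁻¹ * (φ ^ k) u * x := by
  have hφmod : ∀ n : ℕ, φ ^ n = φ ^ (n % m) := by
    intro n
    conv_lhs => rw [← Nat.mod_add_div n m]
    rw [pow_add, pow_mul, hφ, one_pow, mul_one]
  have htmod : ∀ n : ℕ, t ^ n = t ^ (n % m) := by
    intro n
    conv_lhs => rw [← Nat.mod_add_div n m]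
    rw [pow_add, pow_mul, ht, one_pow, mul_one]
  have base : ∀ g : G, ι g * t = t * ι (φ g) := by
    intro g
    rw [← hconj g]; group
  have comm : ∀ (n : ℕ) (g : G), ι g * t ^ n = t ^ n * ι ((φ ^ n) g) := by
    intro n
    induction n with
    | zero => simp
    | succ n ih =>
      intro g
      rw [pow_succ, ← mul_assoc, ih g, mul_assoc, base, pow_succ', MulAut.mul_apply,
        mul_assoc]
  constructor
  · rintro hc
    rw [isConj_iff] at hc
    obtain ⟨c, hc⟩ := hc
    obtain ⟨l, hl, w, rfl⟩ := hsurj c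
    have hinv : (t ^ l)⁻¹ = t ^ (m - l) := by
      apply inv_eq_of_mul_eq_one_right
      rw [← pow_add, Nat.add_sub_cancel' hl.le, ht]
    have key : t ^ l * ι w * (t ^ a * ι u) * (t ^ l * ι w)⁻¹
        = t ^ a * ι ((φ ^ (m - l)) ((φ ^ a) w * (u * w⁻¹))) := by
      rw [mul_inv_rev, hinv, ← map_inv]
      calc t ^ l * ι w * (t ^ a * ι u) * (ι w⁻¹ * t ^ (m - l))
          = t ^ l * (ι w * t ^ a) * (ι u * ι w⁻¹ * t ^ (m - l)) := by
            simp [mul_assoc]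
        _ = t ^ l * (t ^ a * ι ((φ ^ a) w)) * (ι (u * w⁻¹) * t ^ (m - l)) := by
            rw [comm, map_mul]
        _ = t ^ l * t ^ a * (ι ((φ ^ a) w * (u * w⁻¹)) * t ^ (m - l)) := by
            simp [mul_assoc, map_mul]
        _ = t ^ l * t ^ a * (t ^ (m - l) * ι ((φ ^ (m - l)) ((φ ^ a) w * (u * w⁻¹)))) := by
            rw [comm]
        _ = t ^ (l + a + (m - l)) * ι ((φ ^ (m - l)) ((φ ^ a) w * (u * w⁻¹))) := by
            rw [pow_add, pow_add]; simp [mul_assoc]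
        _ = t ^ a * ι ((φ ^ (m - l)) ((φ ^ a) w * (u * w⁻¹))) := by
            congr 1
            have h1 : l + a + (m - l) = a + m := by omega
            rw [h1, htmod (a + m), Nat.add_mod_right, Nat.mod_eq_of_lt ha]
    rw [key] at hc
    obtain ⟨hab, hv⟩ := hnf a b ha hb _ _ hc
    refine ⟨hab, (m - l) % m, Nat.mod_lt _ hm, ((φ ^ (m - l)) w)⁻¹, ?_⟩
    rw [← hφmod (m - l), ← hv]
    simp only [map_mul, map_inv, inv_inv, ← MulAut.mul_apply, ← pow_add]
    rw [Nat.add_comm (m - l) a]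
    simp [mul_assoc]
  · rintro ⟨rfl, k, hk, x, hx⟩
    rw [isConj_iff]
    refine ⟨ι x⁻¹ * t ^ (m - k), ?_⟩
    have hinv : (t ^ (m - k))⁻¹ = t ^ k := by
      apply inv_eq_of_mul_eq_one_right
      rw [← pow_add, Nat.sub_add_cancel hk.le, ht]
    rw [mul_inv_rev, hinv, ← map_inv, inv_inv]
    calc ι x⁻¹ * t ^ (m - k) * (t ^ a * ι u) * (t ^ k * ι x)
        = ι x⁻¹ * (t ^ (m - k) * t ^ a) * ((ι u * t ^ k) * ι x) := by
          simp [mul_assoc]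
      _ = ι x⁻¹ * (t ^ (m - k) * t ^ a) * (t ^ k * (ι ((φ ^ k) u) * ι x)) := by
          rw [comm]; simp [mul_assoc]
      _ = ι x⁻¹ * (t ^ (m - k + a + k)) * ι ((φ ^ k) u * x) := by
          rw [pow_add, pow_add, map_mul]; simp [mul_assoc]
      _ = ι x⁻¹ * t ^ a * ι ((φ ^ k) u * x) := by
          congr 2
          have h1 : m - k + a + k = a + m := by omega
          rw [h1, htmod (a + m), Nat.add_mod_right, Nat.mod_eq_of_lt ha]
      _ = t ^ a * ι ((φ ^ a) x⁻¹ * ((φ ^ k) u * x)) := by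
          rw [comm, map_mul]; simp [mul_assoc]
      _ = t ^ a * ι v := by
          rw [hx]; simp [mul_assoc]
end

section
/- Let X be a finite alphabet and ψ a permutation of X of finite order m, extended to words letterwise. If L ⊆ X* is a regular language, then the ψ-cyclic closure Cyc_ψ(L), consisting of all words ψᵏ(x_{i+1})…ψᵏ(x_n)ψ^{k−1}(x_1)…ψ^{k−1}(x_i) for x_1…x_n ∈ L, 1 ≤ i ≤ n, 0 ≤ k ≤ m−1, is regular. -/
open List

/-- NFA recognizing the ψ-cyclic closure: state `(k, q, p, c)` means: guessed
rotation exponent `k`, guessed split state `q`, current simulated state `p`,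
and `c` tells whether we have switched to the `u`-part yet. -/
def cycNFA {X σ : Type*} (ψ : Equiv.Perm X) (m : ℕ) (M : DFA X σ) :
    NFA X (Fin m × σ × σ × Bool) where
  step := fun s a => match s with
    | (k, q, p, true) => {(k, q, M.step p ((ψ ^ ((k : ℤ) - 1))⁻¹ a), true)}
    | (k, q, p, false) =>
        {(k, q, M.step p ((ψ ^ (k : ℤ))⁻¹ a), false)} ∪
        {t | p ∈ M.accept ∧ t = (k, q, M.step M.start ((ψ ^ ((k : ℤ) - 1))⁻¹ a), true)}
  start := {s | s.2.2.1 = s.2.1 ∧ s.2.2.2 = false}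
  accept := {s | s.2.2.1 = s.2.1 ∧ s.2.2.2 = true}

lemma cycNFA_eval {X σ : Type*} (ψ : Equiv.Perm X) (m : ℕ) (M : DFA X σ)
    (w : List X) (k : Fin m) (q p : σ) (c : Bool) :
    (k, q, p, c) ∈ (cycNFA ψ m M).evalFrom (cycNFA ψ m M).start w ↔
      if c then
        ∃ u v : List X, w = v.map ⇑(ψ ^ (k : ℤ)) ++ u.map ⇑(ψ ^ ((k : ℤ) - 1)) ∧
          u ≠ [] ∧ M.evalFrom q v ∈ M.accept ∧ p = M.evalFrom M.start u
      else
        ∃ v : List X, w = v.map ⇑(ψ ^ (k : ℤ)) ∧ p = M.evalFrom q v := by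
  induction w using List.reverseRecOn generalizing p c with
  | nil =>
    cases c with
    | false =>
      simp only [NFA.evalFrom_nil, cycNFA, Set.mem_setOf_eq, if_false]
      constructor
      · rintro ⟨h1, -⟩; exact ⟨[], by simp, by simpa using h1⟩
      · rintro ⟨v, hv, hp⟩
        have : v = [] := by simpa using hv.symm
        subst this; simp at hp; exact ⟨hp, trivial⟩
    | true =>
      simp only [NFA.evalFrom_nil, cycNFA, Set.mem_setOf_eq, if_true]
      constructor
      · rintro ⟨-, h⟩; simp at h
      · rintro ⟨u, v, hw, hu, -⟩
        exfalso
        have := hw.symm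
        rw [List.append_eq_nil_iff] at this
        exact hu (by simpa using this.2)
  | append_singleton w a ih =>
    rw [NFA.evalFrom_append, NFA.evalFrom_singleton, NFA.mem_stepSet]
    constructor
    · rintro ⟨⟨k', q', p', c'⟩, ht, hs⟩
      cases c' with
      | true =>
        simp only [cycNFA, Set.mem_singleton_iff, Prod.mk.injEq] at hs
        obtain ⟨hk, hq, hp, hc⟩ := hs
        subst hk; subst hq; subst hp; subst hc
        obtain ⟨u, v, hw, hu, hacc, hp'⟩ := by simpa using (ih p' true).mp ht
        rw [if_pos rfl]
        refine ⟨u ++ [(ψ ^ ((k : ℤ) - 1))⁻¹ a], v, ?_, by simp, hacc, ?_⟩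
        · simp [hw, Equiv.apply_symm_apply]
        · simp [DFA.evalFrom_append_singleton, ← hp']
      | false =>
        simp only [cycNFA, Set.mem_union, Set.mem_singleton_iff, Set.mem_setOf_eq,
          Prod.mk.injEq] at hs
        rcases hs with ⟨hk, hq, hp, hc⟩ | ⟨hacc, hk, hq, hp, hc⟩
        · subst hk; subst hq; subst hp; subst hc
          obtain ⟨v, hw, hp'⟩ := by simpa using (ih p' false).mp ht
          rw [if_neg (by simp)]
          refine ⟨v ++ [(ψ ^ (k : ℤ))⁻¹ a], ?_, ?_⟩
          · simp [hw, Equiv.apply_symm_apply]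
          · simp [DFA.evalFrom_append_singleton, ← hp']
        · subst hk; subst hq; subst hp; subst hc
          obtain ⟨v, hw, hp'⟩ := by simpa using (ih p' false).mp ht
          rw [if_pos rfl]
          refine ⟨[(ψ ^ ((k : ℤ) - 1))⁻¹ a], v, ?_, by simp, hp' ▸ hacc, by simp⟩
          simp [hw, Equiv.apply_symm_apply]
    · intro h
      cases c with
      | false =>
        rw [if_neg (by simp)] at h
        obtain ⟨v, hw, hp⟩ := h
        have hv : v = (w.map ⇑(ψ ^ (k : ℤ))⁻¹) ++ [(ψ ^ (k : ℤ))⁻¹ a] := by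
          have := congrArg (List.map ⇑(ψ ^ (k : ℤ))⁻¹) hw
          simpa [List.map_map, Equiv.Perm.inv_def, Equiv.symm_comp_self] using this.symm
        refine ⟨(k, q, M.evalFrom q (w.map ⇑(ψ ^ (k : ℤ))⁻¹), false), ?_, ?_⟩
        · rw [ih]
          refine ⟨w.map ⇑(ψ ^ (k : ℤ))⁻¹, ?_, rfl⟩
          simp [List.map_map, Equiv.Perm.inv_def, Equiv.self_comp_symm]
        · refine Set.mem_union_left _ ?_
          rw [Set.mem_singleton_iff, hp, hv, DFA.evalFrom_append_singleton]
      | true =>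
        rw [if_pos rfl] at h
        obtain ⟨u, v, hw, hu, hacc, hp⟩ := h
        obtain rfl | ⟨u₀, x, rfl⟩ := u.eq_nil_or_concat'
        · exact absurd rfl hu
        · rw [List.map_append, ← List.append_assoc] at hw
          obtain ⟨hw₁, hw₂⟩ := List.append_inj' hw (by simp)
          have ha : a = (ψ ^ ((k : ℤ) - 1)) x := by simpa using hw₂
          have hx : (ψ ^ ((k : ℤ) - 1))⁻¹ a = x := by
            rw [ha]; exact Equiv.Perm.inv_eq_iff_eq.mpr rfl
          obtain rfl | ⟨u₁, y, rfl⟩ := u₀.eq_nil_or_concat'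
          · refine ⟨(k, q, M.evalFrom q v, false), ?_, ?_⟩
            · rw [ih]
              exact ⟨v, by simpa using hw₁, rfl⟩
            · refine Set.mem_union_right _ ⟨hacc, ?_⟩
              rw [hx, hp]
              rfl
          · refine ⟨(k, q, M.evalFrom M.start (u₁ ++ [y]), true), ?_, ?_⟩
            · rw [ih, if_pos rfl]
              exact ⟨u₁ ++ [y], v, hw₁, by simp, hacc, rfl⟩
            · show (k, q, p, true) =
                (k, q, M.step (M.evalFrom M.start (u₁ ++ [y])) ((ψ ^ ((k : ℤ) - 1))⁻¹ a), true)
              rw [hx, hp, DFA.evalFrom_append_singleton]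

/-- The ψ-cyclic closure of a regular language is regular, for a finite-order
letter permutation ψ extended letterwise to words. -/
theorem cyc_closure_regular {X : Type*} [Fintype X]
    (ψ : Equiv.Perm X) (m : ℕ) (hm : 0 < m) (hψ : ψ ^ m = 1)
    (L : Language X) (hL : L.IsRegular) :
    Language.IsRegular {w : List X | ∃ (u v : List X) (k : ℕ), k < m ∧ u ≠ [] ∧
      u ++ v ∈ L ∧
      w = v.map ⇑(ψ ^ (k : ℤ)) ++ u.map ⇑(ψ ^ ((k : ℤ) - 1))} := by
  classical
  obtain ⟨σ, instσ, M, hM⟩ := hL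
  refine ⟨Set (Fin m × σ × σ × Bool), Fintype.ofFinite _, (cycNFA ψ m M).toDFA, ?_⟩
  rw [NFA.toDFA_correct]
  ext w
  rw [NFA.mem_accepts]
  constructor
  · rintro ⟨⟨k, q, p, c⟩, hacc, hev⟩
    simp only [cycNFA, Set.mem_setOf_eq] at hacc
    obtain ⟨rfl, rfl⟩ := hacc
    rw [cycNFA_eval, if_pos rfl] at hev
    obtain ⟨u, v, hw, hu, hrun, hq⟩ := hev
    refine ⟨u, v, k, k.isLt, hu, ?_, hw⟩
    rw [← hM, DFA.mem_accepts, DFA.eval, DFA.evalFrom_of_append, ← hq]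
    exact hrun
  · rintro ⟨u, v, k, hk, hu, huv, hw⟩
    refine ⟨(⟨k, hk⟩, M.evalFrom M.start u, M.evalFrom M.start u, true), ⟨rfl, rfl⟩, ?_⟩
    rw [cycNFA_eval, if_pos rfl]
    refine ⟨u, v, by simpa using hw, hu, ?_, rfl⟩
    rw [← hM, DFA.mem_accepts, DFA.eval, DFA.evalFrom_of_append] at huv
    exact huv
end

section
/- Let G be a finitely generated group with generating set X, and ψ a length-preserving automorphism of G (preserving word length over X). If w is a ψ-twisted conjugacy geodesic (a word whose length equals the minimal length in the ψ-twisted conjugacy class of the element it represents), then every ψ-cyclic permutation of w is also a ψ-twisted conjugacy geodesic. -/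
/-- For a length-preserving automorphism ψ (acting letterwise via the
permutation ψp of the generating letters), any ψ-cyclic permutation of a
ψ-twisted conjugacy geodesic is again a ψ-twisted conjugacy geodesic. -/
theorem cyclicPerm_of_twistedConjGeodesic {X G : Type*} [Fintype X] [Group G]
    (π : X → G) (hgen : ∀ g : G, ∃ w : List X, (w.map π).prod = g)
    (ψ : MulAut G) (ψp : Equiv.Perm X) (m : ℕ) (hm : 0 < m) (hψp : ψp ^ m = 1)
    (hcompat : ∀ x : X, ψ (π x) = π (ψp x))
    (wl : G → ℕ)
    (hwl : ∀ g : G, wl g = sInf {n | ∃ w : List X, (w.map π).prod = g ∧ w.length = n})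
    (hlenpres : ∀ g : G, wl (ψ g) = wl g)
    (tl : G → ℕ)
    (htl : ∀ g : G, tl g = sInf (wl '' {h | ∃ x : G, h = (ψ x)⁻¹ * g * x}))
    (w u v : List X) (k : ℕ) (hk : k < m) (hsplit : w = u ++ v)
    (hw : w.length = tl ((w.map π).prod)) :
    (v.map ⇑(ψp ^ (k : ℤ)) ++ u.map ⇑(ψp ^ ((k : ℤ) - 1))).length =
      tl (((v.map ⇑(ψp ^ (k : ℤ)) ++ u.map ⇑(ψp ^ ((k : ℤ) - 1))).map π).prod) := by
  subst hsplit
  -- compatibility for powers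
  have compat_pow : ∀ (n : ℕ) (x : X), (ψ ^ n) (π x) = π ((ψp ^ n) x) := by
    intro n
    induction n with
    | zero => intro x; simp
    | succ n ih =>
        intro x
        rw [pow_succ', pow_succ']
        simp only [MulAut.mul_apply, Equiv.Perm.mul_apply]
        rw [ih x, hcompat]
  have prod_pow : ∀ (l : List X) (n : ℕ),
      ((l.map ⇑(ψp ^ n)).map π).prod = (ψ ^ n) ((l.map π).prod) := by
    intro l n
    rw [List.map_map]
    have hfun : π ∘ ⇑(ψp ^ n) = ⇑(ψ ^ n) ∘ π := by
      funext x; simp [Function.comp, compat_pow n x]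
    rw [hfun, ← List.map_map]
    exact (map_list_prod (ψ ^ n : MulAut G) _).symm
  have psim : ∀ g : G, (ψ ^ m) g = g := by
    intro g
    obtain ⟨l, hl⟩ := hgen g
    rw [← hl, ← prod_pow, hψp]
    simp
  -- rewrite zpow exponents as natural powers
  have hz1 : (ψp ^ (k : ℤ)) = ψp ^ k := zpow_natCast ψp k
  have hz2 : (ψp ^ ((k : ℤ) - 1)) = ψp ^ (k + m - 1) := by
    have h1 : (ψp ^ (m : ℤ)) = 1 := by rw [zpow_natCast, hψp]
    calc ψp ^ ((k : ℤ) - 1) = ψp ^ ((k : ℤ) - 1) * ψp ^ (m : ℤ) := by rw [h1, mul_one]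
      _ = ψp ^ ((k : ℤ) - 1 + m) := (zpow_add ψp _ _).symm
      _ = ψp ^ (((k + m - 1 : ℕ) : ℤ)) := by congr 1; omega
      _ = ψp ^ (k + m - 1) := zpow_natCast _ _
  rw [hz1, hz2]
  set n := k + m - 1 with hn
  set a := (u.map π).prod with ha
  set b := (v.map π).prod with hb
  have hg : (((u ++ v).map π).prod) = a * b := by
    rw [List.map_append, List.prod_append]
  set g := a * b with hgdef
  -- element represented by the cyclic permutation
  have hg' : (((v.map ⇑(ψp ^ k) ++ u.map ⇑(ψp ^ n)).map π).prod) = (ψ ^ n) (ψ b * a) := by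
    rw [List.map_append, List.prod_append, prod_pow, prod_pow, map_mul]
    congr 1
    have : (ψ ^ n) (ψ b) = (ψ ^ (n + 1)) b := by
      rw [pow_succ]; simp [MulAut.mul_apply]
    rw [this]
    have hnm : n + 1 = k + m := by omega
    rw [hnm, pow_add]
    simp [MulAut.mul_apply, psim]
    exact hb.symm
  set g' := (ψ ^ n) (ψ b * a) with hg'def
  -- twisted conjugacy machinery
  have Rstep : ∀ (gg h : G), (∃ x, h = (ψ x)⁻¹ * gg * x) → ∃ x, ψ h = (ψ x)⁻¹ * gg * x := by
    rintro gg h ⟨x, hx⟩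
    refine ⟨x * h⁻¹, ?_⟩
    rw [map_mul, map_inv, mul_inv_rev, inv_inv]
    calc ψ h = ψ h * (((ψ x)⁻¹ * gg * x) * h⁻¹) := by rw [← hx]; group
      _ = ψ h * (ψ x)⁻¹ * gg * (x * h⁻¹) := by group
  have Rpow : ∀ (N : ℕ) (gg h : G), (∃ x, h = (ψ x)⁻¹ * gg * x) →
      ∃ x, (ψ ^ N) h = (ψ x)⁻¹ * gg * x := by
    intro N
    induction N with
    | zero => intro gg h hx; simpa using hx
    | succ N ih =>
        intro gg h hx
        have h2 := Rstep gg _ (ih gg h hx)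
        rw [pow_succ']
        simpa [MulAut.mul_apply] using h2
  have hrel : ∃ x, g' = (ψ x)⁻¹ * g * x := by
    apply Rpow n g (ψ b * a)
    refine ⟨b⁻¹, ?_⟩
    rw [map_inv, inv_inv]
    simp only [hgdef]
    group
  have setEq : {h | ∃ x : G, h = (ψ x)⁻¹ * g * x} = {h | ∃ x : G, h = (ψ x)⁻¹ * g' * x} := by
    obtain ⟨x0, hx0⟩ := hrel
    ext h
    constructor
    · rintro ⟨z, rfl⟩
      refine ⟨x0⁻¹ * z, ?_⟩
      rw [hx0, map_mul, map_inv, mul_inv_rev, inv_inv]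
      group
    · rintro ⟨y, rfl⟩
      refine ⟨x0 * y, ?_⟩
      rw [hx0, map_mul, mul_inv_rev]
      group
  have htl_eq : tl g = tl g' := by rw [htl, htl, setEq]
  -- length bounds
  have hwl_le : wl g' ≤ (v.map ⇑(ψp ^ k) ++ u.map ⇑(ψp ^ n)).length := by
    rw [hwl]
    exact Nat.sInf_le ⟨v.map ⇑(ψp ^ k) ++ u.map ⇑(ψp ^ n), hg', rfl⟩
  have htl_le : tl g' ≤ wl g' := by
    rw [htl]
    exact Nat.sInf_le ⟨g', ⟨1, by simp⟩, rfl⟩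
  have hlen : (v.map ⇑(ψp ^ k) ++ u.map ⇑(ψp ^ n)).length = (u ++ v).length := by
    simp [List.length_append]; omega
  rw [hg', ← htl_eq]
  rw [hg] at hw
  omega
end

section
/- The language I = { xᵖ(xy)ᵠxʳ : p ≥ q ≥ 1, r ≥ q } over the alphabet {x, y} is not context-free. -/
open ContextFreeGrammar

namespace CFPump

variable {T : Type} {g : ContextFreeGrammar.{0} T}

/-- Derivation in exactly `n` steps. -/
inductive DerivesIn (g : ContextFreeGrammar.{0} T) :
    List (Symbol T g.NT) → List (Symbol T g.NT) → ℕ → Prop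
  | refl (w) : DerivesIn g w w 0
  | head {u v w n} : g.Produces u v → DerivesIn g v w n → DerivesIn g u w (n + 1)

lemma DerivesIn.toDerives {u w : List (Symbol T g.NT)} {n : ℕ}
    (h : DerivesIn g u w n) : g.Derives u w := by
  induction h with
  | refl w => rfl
  | head hp _ ih => exact hp.trans_derives ih

lemma DerivesIn.tail {u v w : List (Symbol T g.NT)} {n : ℕ}
    (h : DerivesIn g u v n) (hp : g.Produces v w) : DerivesIn g u w (n + 1) := by
  induction h with
  | refl w => exact .head hp (.refl _)
  | head hp' _ ih => exact .head hp' (ih hp)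

lemma derives_toDerivesIn {u w : List (Symbol T g.NT)}
    (h : g.Derives u w) : ∃ n, DerivesIn g u w n := by
  induction h with
  | refl => exact ⟨0, .refl _⟩
  | tail _ hp ih => obtain ⟨n, hn⟩ := ih; exact ⟨n + 1, hn.tail hp⟩

lemma DerivesIn.trans {u v w : List (Symbol T g.NT)} {m n : ℕ}
    (h₁ : DerivesIn g u v m) (h₂ : DerivesIn g v w n) : DerivesIn g u w (m + n) := by
  induction h₁ with
  | refl w => simpa using h₂
  | head hp _ ih => have := DerivesIn.head hp (ih h₂); simpa [Nat.add_right_comm] using this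

lemma DerivesIn.append_left {v w : List (Symbol T g.NT)} {n : ℕ}
    (h : DerivesIn g v w n) (p : List (Symbol T g.NT)) :
    DerivesIn g (p ++ v) (p ++ w) n := by
  induction h with
  | refl w => exact .refl _
  | head hp _ ih => exact .head (hp.append_left p) ih

lemma DerivesIn.append_right {v w : List (Symbol T g.NT)} {n : ℕ}
    (h : DerivesIn g v w n) (p : List (Symbol T g.NT)) :
    DerivesIn g (v ++ p) (w ++ p) n := by
  induction h with
  | refl w => exact .refl _
  | head hp _ ih => exact .head (hp.append_right p) ih

lemma DerivesIn.append {u₁ u₂ w₁ w₂ : List (Symbol T g.NT)} {n₁ n₂ : ℕ}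
    (h₁ : DerivesIn g u₁ w₁ n₁) (h₂ : DerivesIn g u₂ w₂ n₂) :
    DerivesIn g (u₁ ++ u₂) (w₁ ++ w₂) (n₁ + n₂) :=
  (h₁.append_right u₂).trans (h₂.append_left w₁)

lemma derives_append {u₁ u₂ w₁ w₂ : List (Symbol T g.NT)}
    (h₁ : g.Derives u₁ w₁) (h₂ : g.Derives u₂ w₂) :
    g.Derives (u₁ ++ u₂) (w₁ ++ w₂) :=
  (h₁.append_right u₂).trans (h₂.append_left w₁)

lemma produces_nil_false {w : List (Symbol T g.NT)} (h : g.Produces [] w) : False := by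
  obtain ⟨r, -, hrw⟩ := h
  rw [ContextFreeRule.rewrites_iff] at hrw
  obtain ⟨p, q, hpq, -⟩ := hrw
  simp at hpq

lemma DerivesIn.nil_eq {w : List (Symbol T g.NT)} {n : ℕ}
    (h : DerivesIn g [] w n) : w = [] ∧ n = 0 := by
  cases h with
  | refl => exact ⟨rfl, rfl⟩
  | head hp _ => exact absurd hp produces_nil_false

lemma produces_terminal_false {t : T} {w : List (Symbol T g.NT)}
    (h : g.Produces [Symbol.terminal t] w) : False := by
  obtain ⟨r, -, hrw⟩ := h
  rw [ContextFreeRule.rewrites_iff] at hrw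
  obtain ⟨p, q, hpq, -⟩ := hrw
  cases p with
  | nil => simp at hpq
  | cons a p' => cases p' <;> simp at hpq

lemma DerivesIn.terminal_eq {t : T} {w : List (Symbol T g.NT)} {n : ℕ}
    (h : DerivesIn g [Symbol.terminal t] w n) : w = [Symbol.terminal t] ∧ n = 0 := by
  cases h with
  | refl => exact ⟨rfl, rfl⟩
  | head hp _ => exact absurd hp produces_terminal_false

lemma produces_singleton_nt {A : g.NT} {w : List (Symbol T g.NT)}
    (h : g.Produces [Symbol.nonterminal A] w) :
    ∃ r ∈ g.rules, r.input = A ∧ w = r.output := by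
  obtain ⟨r, hr, hrw⟩ := h
  rw [ContextFreeRule.rewrites_iff] at hrw
  obtain ⟨p, q, hpq, hw⟩ := hrw
  cases p with
  | nil =>
    cases q with
    | nil =>
      simp at hpq hw
      exact ⟨r, hr, by simp [hpq], by simp [hw]⟩
    | cons b q' => simp at hpq
  | cons a p' => cases p' <;> simp at hpq

/-- A `Produces` step on a concatenation happens in one of the two halves. -/
lemma produces_append_split {u₁ u₂ w : List (Symbol T g.NT)}
    (h : g.Produces (u₁ ++ u₂) w) :
    (∃ w₁, g.Produces u₁ w₁ ∧ w = w₁ ++ u₂) ∨ (∃ w₂, g.Produces u₂ w₂ ∧ w = u₁ ++ w₂) := by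
  obtain ⟨r, hr, hrw⟩ := h
  rw [ContextFreeRule.rewrites_iff] at hrw
  obtain ⟨p, q, hpq, hw⟩ := hrw
  rw [List.append_assoc] at hpq
  rcases List.append_eq_append_iff.mp hpq with ⟨a', hp, hu₂⟩ | ⟨c', hu₁, hd⟩
  · right
    refine ⟨a' ++ r.output ++ q, ⟨r, hr, ?_⟩, ?_⟩
    · rw [hu₂, ← List.append_assoc]
      exact r.rewrites_of_exists_parts a' q
    · rw [hw, hp]; simp [List.append_assoc]
  · cases c' with
    | nil =>
      right
      refine ⟨[] ++ r.output ++ q, ⟨r, hr, ?_⟩, ?_⟩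
      · simp at hd
        rw [← hd]
        simpa using r.rewrites_of_exists_parts [] q
      · simp at hu₁
        rw [hw, hu₁]; simp
    | cons y c'' =>
      left
      simp only [List.cons_append, List.cons.injEq] at hd
      obtain ⟨hy, hq⟩ := hd
      simp only [List.nil_append] at hq
      refine ⟨p ++ r.output ++ c'', ⟨r, hr, ?_⟩, ?_⟩
      · rw [hu₁, ← hy]
        simpa using r.rewrites_of_exists_parts p c''
      · rw [hw, hq]; simp [List.append_assoc]

lemma DerivesIn.append_split {u₁ u₂ w : List (Symbol T g.NT)} {n : ℕ}
    (h : DerivesIn g (u₁ ++ u₂) w n) :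
    ∃ w₁ w₂ n₁ n₂, w = w₁ ++ w₂ ∧ n = n₁ + n₂ ∧
      DerivesIn g u₁ w₁ n₁ ∧ DerivesIn g u₂ w₂ n₂ := by
  induction n generalizing u₁ u₂ with
  | zero =>
    cases h with
    | refl => exact ⟨u₁, u₂, 0, 0, rfl, rfl, .refl _, .refl _⟩
  | succ n ih =>
    cases h with
    | head hp hd =>
      rcases produces_append_split hp with ⟨w₁', hp₁, rfl⟩ | ⟨w₂', hp₂, rfl⟩
      · obtain ⟨w₁, w₂, n₁, n₂, rfl, hn, h₁, h₂⟩ := ih hd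
        exact ⟨w₁, w₂, n₁ + 1, n₂, rfl, by omega, .head hp₁ h₁, h₂⟩
      · obtain ⟨w₁, w₂, n₁, n₂, rfl, hn, h₁, h₂⟩ := ih hd
        exact ⟨w₁, w₂, n₁, n₂ + 1, rfl, by omega, h₁, .head hp₂ h₂⟩


open scoped Classical in
/-- All relevant nonterminals of a grammar. -/
noncomputable def nts (g : ContextFreeGrammar.{0} T) : Finset g.NT :=
  insert g.initial (g.rules.sup fun r => insert r.input
    (r.output.filterMap fun s => match s with
      | Symbol.nonterminal n => some n
      | Symbol.terminal _ => none).toFinset)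

lemma initial_mem_nts : g.initial ∈ nts g := by
  classical
  exact Finset.mem_insert_self _ _

lemma mem_nts_of_output {r : ContextFreeRule T g.NT} {B : g.NT}
    (hr : r ∈ g.rules) (hB : Symbol.nonterminal B ∈ r.output) : B ∈ nts g := by
  classical
  refine Finset.mem_insert_of_mem ?_
  have hle := Finset.le_sup (f := fun r => insert r.input
    (r.output.filterMap fun s => match s with
      | Symbol.nonterminal n => some n
      | Symbol.terminal _ => none).toFinset) hr
  refine Finset.mem_of_subset hle (Finset.mem_insert_of_mem ?_)
  rw [List.mem_toFinset, List.mem_filterMap]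
  exact ⟨Symbol.nonterminal B, hB, rfl⟩

/-- Bound on the lengths of right-hand sides of rules. -/
noncomputable def mB (g : ContextFreeGrammar.{0} T) : ℕ :=
  max 1 (g.rules.sup fun r => r.output.length)

lemma one_le_mB : 1 ≤ mB g := le_max_left _ _

lemma output_length_le_mB {r : ContextFreeRule T g.NT} (hr : r ∈ g.rules) :
    r.output.length ≤ mB g :=
  le_trans (Finset.le_sup (f := fun r => r.output.length) hr) (le_max_right _ _)

/-- If a list of symbols derives a long terminal word, some single symbol
derives a long piece. -/
lemma big_piece :
    ∀ (α : List (Symbol T g.NT)) (w : List T) (n ℓ : ℕ),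
    DerivesIn g α (w.map Symbol.terminal) n → ℓ * α.length < w.length →
    ∃ (α₁ α₂ : List (Symbol T g.NT)) (a : Symbol T g.NT)
      (w₁ w' w₂ : List T) (n₁ n' n₂ : ℕ),
      α = α₁ ++ a :: α₂ ∧ w = w₁ ++ w' ++ w₂ ∧ ℓ < w'.length ∧
      n = n₁ + n' + n₂ ∧
      DerivesIn g α₁ (w₁.map Symbol.terminal) n₁ ∧
      DerivesIn g [a] (w'.map Symbol.terminal) n' ∧
      DerivesIn g α₂ (w₂.map Symbol.terminal) n₂ := by
  intro α
  induction α with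
  | nil =>
    intro w n ℓ h hl
    obtain ⟨hw, -⟩ := h.nil_eq
    rw [List.map_eq_nil_iff] at hw
    subst hw
    simp at hl
  | cons a α' ih =>
    intro w n ℓ h hl
    obtain ⟨x₁, x₂, n₁, n₂, hx, hn, h₁, h₂⟩ := (show DerivesIn g ([a] ++ α') _ n by simpa using h).append_split
    obtain ⟨w₁, w₂, rfl, rfl, rfl⟩ := List.map_eq_append_iff.mp hx
    by_cases hw₁ : ℓ < w₁.length
    · exact ⟨[], α', a, [], w₁, w₂, 0, n₁, n₂, rfl, rfl, hw₁, by omega, .refl _, h₁, h₂⟩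
    · have hl' : ℓ * α'.length < w₂.length := by
        have : ℓ * (a :: α').length = ℓ * α'.length + ℓ := by
          simp [List.length_cons, Nat.mul_add, Nat.mul_one]
        simp only [List.length_append] at hl
        omega
      obtain ⟨α₁, α₂, b, y₁, y', y₂, m₁, m', m₂, hα, hy, hy', hm, hd₁, hd', hd₂⟩ :=
        ih w₂ n₂ ℓ h₂ hl'
      exact ⟨a :: α₁, α₂, b, w₁ ++ y₁, y', y₂, n₁ + m₁, m', m₂,
        by rw [hα]; rfl, by rw [hy]; simp, hy', by omega,
        by simpa using h₁.append hd₁, hd', hd₂⟩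


lemma DerivesIn.zero_eq {u w : List (Symbol T g.NT)} (h : DerivesIn g u w 0) : u = w := by
  cases h; rfl

lemma derivesIn_nt_succ {A : g.NT} {w : List (Symbol T g.NT)} {n : ℕ}
    (h : DerivesIn g [Symbol.nonterminal A] w (n + 1)) :
    ∃ r ∈ g.rules, r.input = A ∧ DerivesIn g r.output w n := by
  cases h with
  | head hp hd =>
    obtain ⟨r, hr, hri, rfl⟩ := produces_singleton_nt hp
    exact ⟨r, hr, hri, hd⟩

lemma pump_core :
    ∀ (n : ℕ) (A : g.NT) (w : List T) (S : Finset g.NT),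
    A ∈ nts g → A ∉ S → S ⊆ nts g →
    DerivesIn g [Symbol.nonterminal A] (w.map Symbol.terminal) n →
    (∀ k, DerivesIn g [Symbol.nonterminal A] (w.map Symbol.terminal) k → n ≤ k) →
    mB g ^ ((nts g).card - S.card) < w.length →
    (∃ (B : g.NT) (s t u v x : List T),
        w = s ++ t ++ u ++ v ++ x ∧
        1 ≤ t.length + v.length ∧
        t.length + u.length + v.length ≤ w.length ∧
        g.Derives [Symbol.nonterminal A]
          (s.map Symbol.terminal ++ [Symbol.nonterminal B] ++ x.map Symbol.terminal) ∧
        g.Derives [Symbol.nonterminal B]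
          (t.map Symbol.terminal ++ [Symbol.nonterminal B] ++ v.map Symbol.terminal) ∧
        g.Derives [Symbol.nonterminal B] (u.map Symbol.terminal)) ∨
    (∃ B ∈ S, ∃ (t u v : List T) (n₂ : ℕ),
        w = t ++ u ++ v ∧
        g.Derives [Symbol.nonterminal A]
          (t.map Symbol.terminal ++ [Symbol.nonterminal B] ++ v.map Symbol.terminal) ∧
        DerivesIn g [Symbol.nonterminal B] (u.map Symbol.terminal) n₂ ∧ n₂ < n) := by
  intro n
  induction n using Nat.strong_induction_on with
  | _ n ih =>
  intro A w S hA hAS hS hder hmin hlen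
  classical
  have hKS : S.card < (nts g).card := Finset.card_lt_card ⟨hS, fun hc => hAS (hc hA)⟩
  rcases n with _ | n
  · exact absurd hder.zero_eq (by cases w <;> simp)
  obtain ⟨r, hr, hri, hout⟩ := derivesIn_nt_succ hder
  have hαlen : r.output.length ≤ mB g := output_length_le_mB hr
  have hlℓ : mB g ^ ((nts g).card - S.card - 1) * r.output.length < w.length := by
    calc mB g ^ ((nts g).card - S.card - 1) * r.output.length
        ≤ mB g ^ ((nts g).card - S.card - 1) * mB g := Nat.mul_le_mul_left _ hαlen
      _ = mB g ^ ((nts g).card - S.card) := by rw [← pow_succ]; congr 1; omega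
      _ < w.length := hlen
  obtain ⟨α₁, α₂, a, w₁, w', w₂, n₁, n', n₂, hαeq, hw, hw'len, hn, hd₁, hd', hd₂⟩ :=
    big_piece r.output w n _ hout hlℓ
  have honeℓ : 1 ≤ mB g ^ ((nts g).card - S.card - 1) :=
    Nat.one_le_pow _ _ (Nat.lt_of_lt_of_le Nat.zero_lt_one one_le_mB)
  obtain t | B := a
  · exfalso
    obtain ⟨heq, -⟩ := hd'.terminal_eq
    have := congrArg List.length heq
    simp at this
    omega
  have hBout : Symbol.nonterminal B ∈ r.output := by rw [hαeq]; simp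
  have hBnts : B ∈ nts g := mem_nts_of_output hr hBout
  have step1 : g.Produces [Symbol.nonterminal A] r.output := by
    rw [← hri]; exact ⟨r, hr, ContextFreeRule.Rewrites.input_output⟩
  have hre : α₁ ++ Symbol.nonterminal B :: α₂ = (α₁ ++ [Symbol.nonterminal B]) ++ α₂ := by simp
  have recomb : ∀ (mid : List (Symbol T g.NT)) (k : ℕ),
      DerivesIn g [Symbol.nonterminal B] mid k →
      DerivesIn g [Symbol.nonterminal A]
        ((w₁.map Symbol.terminal ++ mid) ++ w₂.map Symbol.terminal) (n₁ + k + n₂ + 1) := by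
    intro mid k hk
    refine DerivesIn.head step1 ?_
    rw [hαeq, hre]
    exact (hd₁.append hk).append hd₂
  have hmin' : ∀ k, DerivesIn g [Symbol.nonterminal B] (w'.map Symbol.terminal) k → n' ≤ k := by
    intro k hk
    have h2 := recomb _ k hk
    have h3 : DerivesIn g [Symbol.nonterminal A] (w.map Symbol.terminal) (n₁ + k + n₂ + 1) := by
      rw [hw, List.map_append, List.map_append]
      exact h2
    have := hmin _ h3
    omega
  by_cases hBA : B = A
  · subst hBA
    by_cases hnil : w₁ = [] ∧ w₂ = []
    · exfalso
      obtain ⟨h1, h2⟩ := hnil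
      subst h1; subst h2
      simp only [List.nil_append, List.append_nil] at hw
      subst hw
      have := hmin n' hd'
      omega
    · left
      refine ⟨B, [], w₁, w', w₂, [], by simp [hw], ?_, by simp [hw]; omega, ?_,
        (recomb [Symbol.nonterminal B] 0 (.refl _)).toDerives, hd'.toDerives⟩
      · rcases not_and_or.mp hnil with h | h
        · have : w₁.length ≠ 0 := fun hh => h (List.length_eq_zero_iff.mp hh)
          omega
        · have : w₂.length ≠ 0 := fun hh => h (List.length_eq_zero_iff.mp hh)
          omega
      · simpa using Derives.refl (g := g) [Symbol.nonterminal B]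
  by_cases hBS : B ∈ S
  · right
    exact ⟨B, hBS, w₁, w', w₂, n', by simpa [List.append_assoc] using hw,
      (recomb [Symbol.nonterminal B] 0 (.refl _)).toDerives, hd', by omega⟩
  -- recursive case
  have hcard : ((nts g).card - (insert A S).card) = (nts g).card - S.card - 1 := by
    rw [Finset.card_insert_of_notMem hAS]
    omega
  have hrec := ih n' (by omega) B w' (insert A S) hBnts
    (by simp [hBA, hBS]) (Finset.insert_subset hA hS) hd' hmin'
    (by rw [hcard]; exact hw'len)
  have base : g.Derives [Symbol.nonterminal A]
      ((w₁.map Symbol.terminal ++ [Symbol.nonterminal B]) ++ w₂.map Symbol.terminal) :=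
    (recomb [Symbol.nonterminal B] 0 (.refl _)).toDerives
  have hwlen : w.length = w₁.length + w'.length + w₂.length := by
    rw [hw]; simp; omega
  rcases hrec with ⟨B', s', t, u, v, x', hw'eq, htv, htuv, hD1, hD2, hD3⟩ |
    ⟨B', hB'mem, t, u, v, k₂, hw'eq, hD1, hD2, hk₂⟩
  · left
    refine ⟨B', w₁ ++ s', t, u, v, x' ++ w₂, ?_, htv, ?_, ?_, hD2, hD3⟩
    · rw [hw, hw'eq]; simp
    · have := congrArg List.length hw'eq
      simp [List.length_append] at this ⊢
      omega
    · have lift := (hD1.append_left (w₁.map Symbol.terminal)).append_right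
        (w₂.map Symbol.terminal)
      have := base.trans lift
      simpa [List.map_append, List.append_assoc] using this
  · by_cases hB'A : B' = A
    · subst hB'A
      by_cases hz : w₁ ++ t = [] ∧ v ++ w₂ = []
      · exfalso
        simp only [List.append_eq_nil_iff] at hz
        obtain ⟨⟨h1, h2⟩, h3, h4⟩ := hz
        subst h1; subst h2; subst h3; subst h4
        simp only [List.nil_append, List.append_nil] at hw hw'eq
        have hwu : w = u := by rw [hw, hw'eq]
        have := hmin k₂ (by rw [hwu]; exact hD2)
        omega
      · left
        refine ⟨B', [], w₁ ++ t, u, v ++ w₂, [], ?_, ?_, ?_,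
          by simpa using Derives.refl (g := g) [Symbol.nonterminal B'], ?_, hD2.toDerives⟩
        · rw [hw, hw'eq]; simp
        · rcases not_and_or.mp hz with h | h
          · have : (w₁ ++ t).length ≠ 0 := fun hh => h (List.length_eq_zero_iff.mp hh)
            simp only [List.length_append] at this ⊢
            omega
          · have : (v ++ w₂).length ≠ 0 := fun hh => h (List.length_eq_zero_iff.mp hh)
            simp only [List.length_append] at this ⊢
            omega
        · have := congrArg List.length hw'eq
          simp [List.length_append] at this ⊢
          omega
        · have lift := (hD1.append_left (w₁.map Symbol.terminal)).append_right
            (w₂.map Symbol.terminal)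
          have := base.trans lift
          simpa [List.map_append, List.append_assoc] using this
    · right
      have hB'S : B' ∈ S := by
        rcases Finset.mem_insert.mp hB'mem with h | h
        · exact absurd h hB'A
        · exact h
      refine ⟨B', hB'S, w₁ ++ t, u, v ++ w₂, k₂, ?_, ?_, hD2, by omega⟩
      · rw [hw, hw'eq]; simp
      · have lift := (hD1.append_left (w₁.map Symbol.terminal)).append_right
          (w₂.map Symbol.terminal)
        have := base.trans lift
        simpa [List.map_append, List.append_assoc] using this


lemma derives_sandwich {B : g.NT} {L R y out : List (Symbol T g.NT)}
    (h1 : g.Derives y (L ++ [Symbol.nonterminal B] ++ R))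
    (h2 : g.Derives [Symbol.nonterminal B] out) :
    g.Derives y (L ++ out ++ R) :=
  h1.trans ((h2.append_left L).append_right R)

lemma localize :
    ∀ (n : ℕ) (A : g.NT) (w : List T),
    DerivesIn g [Symbol.nonterminal A] (w.map Symbol.terminal) n →
    (∀ k, DerivesIn g [Symbol.nonterminal A] (w.map Symbol.terminal) k → n ≤ k) →
    mB g ^ ((nts g).card + 1) < w.length →
    ∃ (B : g.NT) (s x w' : List T) (n' : ℕ),
      B ∈ nts g ∧ w = s ++ w' ++ x ∧
      g.Derives [Symbol.nonterminal A]
        (s.map Symbol.terminal ++ [Symbol.nonterminal B] ++ x.map Symbol.terminal) ∧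
      DerivesIn g [Symbol.nonterminal B] (w'.map Symbol.terminal) n' ∧
      (∀ k, DerivesIn g [Symbol.nonterminal B] (w'.map Symbol.terminal) k → n' ≤ k) ∧
      mB g ^ (nts g).card < w'.length ∧ w'.length ≤ mB g ^ ((nts g).card + 1) := by
  intro n
  induction n using Nat.strong_induction_on with
  | _ n ih =>
  intro A w hder hmin hlen
  rcases n with _ | n
  · exact absurd hder.zero_eq (by cases w <;> simp)
  obtain ⟨r, hr, hri, hout⟩ := derivesIn_nt_succ hder
  have hαlen : r.output.length ≤ mB g := output_length_le_mB hr
  have hlℓ : mB g ^ (nts g).card * r.output.length < w.length := by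
    calc mB g ^ (nts g).card * r.output.length
        ≤ mB g ^ (nts g).card * mB g := Nat.mul_le_mul_left _ hαlen
      _ = mB g ^ ((nts g).card + 1) := by rw [← pow_succ]
      _ < w.length := hlen
  obtain ⟨α₁, α₂, a, w₁, w', w₂, n₁, n', n₂, hαeq, hw, hw'len, hn, hd₁, hd', hd₂⟩ :=
    big_piece r.output w n _ hout hlℓ
  have honeℓ : 1 ≤ mB g ^ (nts g).card :=
    Nat.one_le_pow _ _ (Nat.lt_of_lt_of_le Nat.zero_lt_one one_le_mB)
  obtain t | B := a
  · exfalso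
    obtain ⟨heq, -⟩ := hd'.terminal_eq
    have := congrArg List.length heq
    simp at this
    omega
  have hBout : Symbol.nonterminal B ∈ r.output := by rw [hαeq]; simp
  have hBnts : B ∈ nts g := mem_nts_of_output hr hBout
  have step1 : g.Produces [Symbol.nonterminal A] r.output := by
    rw [← hri]; exact ⟨r, hr, ContextFreeRule.Rewrites.input_output⟩
  have hre : α₁ ++ Symbol.nonterminal B :: α₂ = (α₁ ++ [Symbol.nonterminal B]) ++ α₂ := by simp
  have recomb : ∀ (mid : List (Symbol T g.NT)) (k : ℕ),
      DerivesIn g [Symbol.nonterminal B] mid k →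
      DerivesIn g [Symbol.nonterminal A]
        ((w₁.map Symbol.terminal ++ mid) ++ w₂.map Symbol.terminal) (n₁ + k + n₂ + 1) := by
    intro mid k hk
    refine DerivesIn.head step1 ?_
    rw [hαeq, hre]
    exact (hd₁.append hk).append hd₂
  have hmin' : ∀ k, DerivesIn g [Symbol.nonterminal B] (w'.map Symbol.terminal) k → n' ≤ k := by
    intro k hk
    have h2 := recomb _ k hk
    have h3 : DerivesIn g [Symbol.nonterminal A] (w.map Symbol.terminal) (n₁ + k + n₂ + 1) := by
      rw [hw, List.map_append, List.map_append]
      exact h2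
    have := hmin _ h3
    omega
  have base : g.Derives [Symbol.nonterminal A]
      ((w₁.map Symbol.terminal ++ [Symbol.nonterminal B]) ++ w₂.map Symbol.terminal) :=
    (recomb [Symbol.nonterminal B] 0 (.refl _)).toDerives
  by_cases hup : w'.length ≤ mB g ^ ((nts g).card + 1)
  · exact ⟨B, w₁, w₂, w', n', hBnts, hw, base, hd', hmin', hw'len, hup⟩
  · obtain ⟨B', s', x', w'', n'', hB'nts, hw'eq, hD1, hD2, hmin'', hlow, hhigh⟩ :=
      ih n' (by omega) B w' hd' hmin' (by omega)
    refine ⟨B', w₁ ++ s', x' ++ w₂, w'', n'', hB'nts, ?_, ?_, hD2, hmin'', hlow, hhigh⟩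
    · rw [hw, hw'eq]; simp
    · have lift := (hD1.append_left (w₁.map Symbol.terminal)).append_right
        (w₂.map Symbol.terminal)
      have := base.trans lift
      simpa [List.map_append, List.append_assoc] using this

lemma derives_iter {B : g.NT} {t v : List T}
    (h : g.Derives [Symbol.nonterminal B]
      (t.map Symbol.terminal ++ [Symbol.nonterminal B] ++ v.map Symbol.terminal)) :
    ∀ i : ℕ, g.Derives [Symbol.nonterminal B]
      (((List.replicate i t).flatten).map Symbol.terminal ++ [Symbol.nonterminal B] ++
        ((List.replicate i v).flatten).map Symbol.terminal) := by
  intro i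
  induction i with
  | zero => simpa using Derives.refl (g := g) [Symbol.nonterminal B]
  | succ i prev =>
    have step := derives_sandwich prev h
    have e1 : (List.replicate (i + 1) t).flatten = (List.replicate i t).flatten ++ t := by
      rw [List.replicate_succ']; simp
    have e2 : (List.replicate (i + 1) v).flatten = v ++ (List.replicate i v).flatten := by
      rw [List.replicate_succ]; simp
    rw [e1, e2]
    simp only [List.map_append, List.append_assoc] at step ⊢
    exact step

/-- The pumping lemma for context-free grammars. -/
theorem cfg_pumping (g : ContextFreeGrammar.{0} T) :
    ∃ k : ℕ, 1 ≤ k ∧ ∀ w ∈ g.language, k ≤ w.length →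
      ∃ s t u v x : List T, w = s ++ t ++ u ++ v ++ x ∧
        1 ≤ t.length + v.length ∧ t.length + u.length + v.length ≤ k ∧
        ∀ i : ℕ, s ++ (List.replicate i t).flatten ++ u ++
          (List.replicate i v).flatten ++ x ∈ g.language := by
  classical
  refine ⟨mB g ^ ((nts g).card + 1) + 1, by omega, ?_⟩
  intro w hw hwk
  rw [mem_language_iff] at hw
  have hex := derives_toDerivesIn hw
  have hd0 : DerivesIn g [Symbol.nonterminal g.initial] (w.map Symbol.terminal)
      (Nat.find hex) := Nat.find_spec hex
  have hmin0 : ∀ k, DerivesIn g [Symbol.nonterminal g.initial] (w.map Symbol.terminal) k →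
      Nat.find hex ≤ k := fun k hk => Nat.find_min' hex hk
  obtain ⟨B₀, s₀, x₀, w₀, n₀, hB₀, hweq, hD0, hd1, hmin1, hlow, hhigh⟩ :=
    localize (Nat.find hex) g.initial w hd0 hmin0 (by omega)
  have hcore := pump_core n₀ B₀ w₀ ∅ hB₀ (Finset.notMem_empty _) (Finset.empty_subset _)
    hd1 hmin1 (by simpa using hlow)
  rcases hcore with ⟨B, s, t, u, v, x, hw₀eq, htv, htuv, hD1, hD2, hD3⟩ |
    ⟨B, hB, -⟩
  · refine ⟨s₀ ++ s, t, u, v, x ++ x₀, ?_, htv, ?_, ?_⟩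
    · rw [hweq, hw₀eq]; simp
    · omega
    · intro i
      rw [mem_language_iff]
      have c1 := derives_sandwich hD0 hD1
      have c1' : g.Derives [Symbol.nonterminal g.initial]
          ((s₀.map Symbol.terminal ++ s.map Symbol.terminal) ++ [Symbol.nonterminal B] ++
            (x.map Symbol.terminal ++ x₀.map Symbol.terminal)) := by
        simp only [List.append_assoc] at c1 ⊢
        exact c1
      have c2 := derives_sandwich c1' (derives_iter hD2 i)
      have c2' : g.Derives [Symbol.nonterminal g.initial]
          (((s₀.map Symbol.terminal ++ s.map Symbol.terminal) ++
              ((List.replicate i t).flatten).map Symbol.terminal) ++ [Symbol.nonterminal B] ++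
            (((List.replicate i v).flatten).map Symbol.terminal ++
              (x.map Symbol.terminal ++ x₀.map Symbol.terminal))) := by
        simp only [List.append_assoc] at c2 ⊢
        exact c2
      have c3 := derives_sandwich c2' hD3
      have hfinal : List.map (Symbol.terminal : T → Symbol T g.NT)
          ((s₀ ++ s) ++ (List.replicate i t).flatten ++ u ++ (List.replicate i v).flatten ++
            (x ++ x₀)) =
          (((s₀.map Symbol.terminal ++ s.map Symbol.terminal) ++
              ((List.replicate i t).flatten).map Symbol.terminal) ++
            (u.map Symbol.terminal) ++
            (((List.replicate i v).flatten).map Symbol.terminal ++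
              (x.map Symbol.terminal ++ x₀.map Symbol.terminal))) := by
        simp [List.map_append, List.append_assoc]
      rw [hfinal]
      exact c3
  · exact absurd hB (Finset.notMem_empty _)

end CFPump

section LangFacts

lemma fin2_one_ne_zero : (1 : Fin 2) ≠ 0 := by decide

lemma flat_count_one (q : ℕ) :
    ((List.replicate q [(0 : Fin 2), 1]).flatten).count 1 = q := by
  induction q with
  | zero => simp
  | succ q ih => simp [List.replicate_succ, List.count_cons, ih, fin2_one_ne_zero]

lemma flat_count_zero (q : ℕ) :
    ((List.replicate q [(0 : Fin 2), 1]).flatten).count 0 = q := by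
  induction q with
  | zero => simp
  | succ q ih => simp [List.replicate_succ, List.count_cons, ih, fin2_one_ne_zero]

lemma flat_length (q : ℕ) :
    ((List.replicate q [(0 : Fin 2), 1]).flatten).length = 2 * q := by
  induction q with
  | zero => simp
  | succ q ih => simp [List.replicate_succ, ih]; omega

lemma fin2_count_add_count (l : List (Fin 2)) : l.count 0 + l.count 1 = l.length := by
  induction l with
  | nil => simp
  | cons a l ih =>
    fin_cases a <;> simp [List.count_cons, fin2_one_ne_zero] <;> omega

lemma count_flatten_replicate (i : ℕ) (l : List (Fin 2)) (c : Fin 2) :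
    ((List.replicate i l).flatten).count c = i * l.count c := by
  induction i with
  | zero => simp
  | succ i ih => simp [List.replicate_succ, List.count_append, ih]; ring

lemma canon_count_one (p q r : ℕ) :
    (List.replicate p (0 : Fin 2) ++ (List.replicate q [0, 1]).flatten ++
      List.replicate r 0).count 1 = q := by
  simp [List.count_append, flat_count_one, List.count_replicate, fin2_one_ne_zero]

lemma canon_count_zero (p q r : ℕ) :
    (List.replicate p (0 : Fin 2) ++ (List.replicate q [0, 1]).flatten ++
      List.replicate r 0).count 0 = p + q + r := by
  simp [List.count_append, flat_count_zero, List.count_replicate]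
  omega

lemma prefix_ones {p q r : ℕ} (hq : 1 ≤ q) {a b : List (Fin 2)}
    (hw : List.replicate p (0 : Fin 2) ++ (List.replicate q [0, 1]).flatten ++
      List.replicate r 0 = a ++ b)
    (ha : 1 ≤ a.count 1) : p + 1 < a.length := by
  by_contra hcon
  push_neg at hcon
  obtain ⟨q', rfl⟩ : ∃ q', q = q' + 1 := ⟨q - 1, by omega⟩
  have hform : List.replicate p (0 : Fin 2) ++ (List.replicate (q' + 1) [0, 1]).flatten ++
      List.replicate r 0 = List.replicate (p + 1) (0 : Fin 2) ++
      ([1] ++ ((List.replicate q' [0, 1]).flatten ++ List.replicate r 0)) := by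
    rw [List.replicate_succ (n := q'), List.replicate_succ' (n := p)]
    simp
  rw [hform] at hw
  have ha' : a = List.replicate a.length (0 : Fin 2) := by
    have h1 : a = (a ++ b).take a.length := List.take_left.symm
    rw [← hw] at h1
    rw [List.take_append_of_le_length (by simpa using hcon)] at h1
    rwa [List.take_replicate, min_eq_left hcon] at h1
  rw [ha'] at ha
  simp [List.count_replicate, fin2_one_ne_zero] at ha

lemma suffix_ones {p q r : ℕ} (_hq : 1 ≤ q) {a b : List (Fin 2)}
    (hw : List.replicate p (0 : Fin 2) ++ (List.replicate q [0, 1]).flatten ++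
      List.replicate r 0 = a ++ b)
    (hb : 1 ≤ b.count 1) : r < b.length := by
  by_contra hcon
  push_neg at hcon
  have hb' : b = List.replicate b.length (0 : Fin 2) := by
    set C := List.replicate p (0 : Fin 2) ++ (List.replicate q [0, 1]).flatten with hC
    have hw' : C ++ List.replicate r 0 = a ++ b := hw
    have hlen : a.length + b.length = C.length + r := by
      have := congrArg List.length hw'
      simp at this
      omega
    have h1 : b = (a ++ b).drop a.length := List.drop_left.symm
    rw [← hw'] at h1
    have ha' : a.length = C.length + (r - b.length) := by omega
    rw [ha', List.drop_append] at h1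
    rw [List.drop_replicate] at h1
    have heq : r - (r - b.length) = b.length := by omega
    rw [List.drop_of_length_le (by omega), List.nil_append, Nat.add_sub_cancel_left, heq] at h1
    exact h1
  rw [hb'] at hb
  simp [List.count_replicate, fin2_one_ne_zero] at hb

end LangFacts

/-- The language `{ x^p (xy)^q x^r : p ≥ q ≥ 1, r ≥ q }` (with `x = 0`,
`y = 1` over a two-letter alphabet) is not context-free. -/
theorem not_contextFree_xp_xyq_xr :
    ¬ Language.IsContextFree {w : List (Fin 2) | ∃ p q r : ℕ,
      1 ≤ q ∧ q ≤ p ∧ q ≤ r ∧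
      w = List.replicate p 0 ++ (List.replicate q [0, 1]).flatten ++
        List.replicate r 0} := by
  rintro ⟨g, hg⟩
  obtain ⟨k, hk1, hpump⟩ := CFPump.cfg_pumping g
  set z : List (Fin 2) :=
    List.replicate k 0 ++ (List.replicate k [0, 1]).flatten ++ List.replicate k 0 with hz
  have hzmem : z ∈ g.language := by
    rw [hg]; exact ⟨k, k, k, hk1, le_refl k, le_refl k, hz⟩
  have hzlen : k ≤ z.length := by
    rw [hz]; simp [flat_length]
  obtain ⟨s, t, u, v, x, hzeq, htv, htuv, hiL⟩ := hpump z hzmem hzlen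
  have hz1 : z.count 1 = k := canon_count_one k k k
  have hz0 : z.count 0 = k + k + k := canon_count_zero k k k
  have hsum1 : s.count 1 + t.count 1 + u.count 1 + v.count 1 + x.count 1 = k := by
    rw [← hz1, hzeq]; simp only [List.count_append]
  have hsum0 : s.count 0 + t.count 0 + u.count 0 + v.count 0 + x.count 0 = k + k + k := by
    rw [← hz0, hzeq]; simp only [List.count_append]
  by_cases ht1 : t.count 1 = 0
  · by_cases hv1 : v.count 1 = 0
    · -- neither `t` nor `v` contains a `1`: pump down, zero count drops below 3×one count
      have h0 := hiL 0
      rw [hg] at h0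
      simp only [List.replicate_zero, List.flatten_nil, List.nil_append, List.append_nil] at h0
      obtain ⟨p', q', r', hq', hqp', hqr', hform⟩ := h0
      have hc1 : q' = k := by
        have h := canon_count_one p' q' r'
        rw [← hform] at h
        simp only [List.count_append] at h
        omega
      have hc0 := canon_count_zero p' q' r'
      rw [← hform] at hc0
      simp only [List.count_append] at hc0
      have hlt : t.count 0 + v.count 0 = t.length + v.length := by
        have h1 := fin2_count_add_count t
        have h2 := fin2_count_add_count v
        omega
      omega
    · -- `v` contains a `1`: pump up beyond the trailing zero block
      set i := v.length + x.length + 1 with hi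
      have hmem := hiL i
      rw [hg] at hmem
      obtain ⟨p', q', r', hq', hqp', hqr', hform⟩ := hmem
      have hV : (List.replicate i v).flatten = (List.replicate (v.length + x.length) v).flatten ++ v := by
        rw [hi, List.replicate_succ']; simp
      have hsplit : s ++ (List.replicate i t).flatten ++ u ++ (List.replicate i v).flatten ++ x
          = (s ++ (List.replicate i t).flatten ++ u ++
              (List.replicate (v.length + x.length) v).flatten) ++ (v ++ x) := by
        rw [hV]; simp [List.append_assoc]
      have hr' := suffix_ones hq' (hform.symm.trans hsplit)
        (by simp only [List.count_append]; omega)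
      have hcnt := canon_count_one p' q' r'
      rw [← hform] at hcnt
      simp only [List.count_append, count_flatten_replicate, ht1, Nat.mul_zero] at hcnt
      obtain ⟨c, hc⟩ : ∃ c, v.count 1 = c + 1 := ⟨v.count 1 - 1, by omega⟩
      rw [hc, Nat.mul_succ] at hcnt
      have hvx : (v ++ x).length = v.length + x.length := List.length_append
      generalize i * c = d at hcnt
      omega
  · -- `t` contains a `1`: pump up beyond the leading zero block
    set i := s.length + t.length + 1 with hi
    have hmem := hiL i
    rw [hg] at hmem
    obtain ⟨p', q', r', hq', hqp', hqr', hform⟩ := hmem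
    have hT : (List.replicate i t).flatten = t ++ (List.replicate (s.length + t.length) t).flatten := by
      rw [hi, List.replicate_succ]; simp
    have hsplit : s ++ (List.replicate i t).flatten ++ u ++ (List.replicate i v).flatten ++ x
        = (s ++ t) ++ ((List.replicate (s.length + t.length) t).flatten ++ u ++
            (List.replicate i v).flatten ++ x) := by
      rw [hT]; simp [List.append_assoc]
    have hp' := prefix_ones hq' (hform.symm.trans hsplit)
      (by simp only [List.count_append]; omega)
    have hcnt := canon_count_one p' q' r'
    rw [← hform] at hcnt
    simp only [List.count_append, count_flatten_replicate] at hcnt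
    obtain ⟨c, hc⟩ : ∃ c, t.count 1 = c + 1 := ⟨t.count 1 - 1, by omega⟩
    rw [hc, Nat.mul_succ] at hcnt
    have hst : (s ++ t).length = s.length + t.length := List.length_append
    generalize i * c = d at hcnt
    generalize i * v.count 1 = e at hcnt
    omega
end

section
/- The language I = { aᵖcᵠaʳ : p, q, r ≥ 1, and (p > q and p > r) or (p = r and p ≥ q) } over the alphabet {a, c} is not context-free. -/
open ContextFreeGrammar Symbol List

variable {T : Type} {g : ContextFreeGrammar T}

/-- Step-indexed derivation. -/
inductive DIn (g : ContextFreeGrammar T) :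
    List (Symbol T g.NT) → List (Symbol T g.NT) → ℕ → Prop
  | refl (w : List (Symbol T g.NT)) : DIn g w w 0
  | head {u v w : List (Symbol T g.NT)} {n : ℕ} :
      g.Produces u v → DIn g v w n → DIn g u w (n + 1)

lemma DIn.toDerives {u v : List (Symbol T g.NT)} {n : ℕ} (h : DIn g u v n) :
    g.Derives u v := by
  induction h with
  | refl => rfl
  | head hp _ ih => exact hp.trans_derives ih

lemma derives_toDIn {u v : List (Symbol T g.NT)} (h : g.Derives u v) :
    ∃ n, DIn g u v n := by
  induction h with
  | refl => exact ⟨0, DIn.refl u⟩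
  | tail _ hp ih =>
      obtain ⟨n, hn⟩ := ih
      refine ⟨n + 1, ?_⟩
      clear * - hn hp
      induction hn with
      | refl => exact DIn.head hp (DIn.refl _)
      | head hq _ ih => exact DIn.head hq (ih hp)

lemma DIn.trans {u v w : List (Symbol T g.NT)} {m n : ℕ}
    (h₁ : DIn g u v m) (h₂ : DIn g v w n) : DIn g u w (m + n) := by
  induction h₁ with
  | refl => simpa using h₂
  | @head a b c k hp _ ih =>
      have h := DIn.head hp (ih h₂)
      have he : k + n + 1 = k + 1 + n := by omega
      rwa [he] at h

lemma DIn.append_left {v w : List (Symbol T g.NT)} {n : ℕ}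
    (h : DIn g v w n) (p : List (Symbol T g.NT)) : DIn g (p ++ v) (p ++ w) n := by
  induction h with
  | refl => exact DIn.refl _
  | head hp _ ih => exact DIn.head (hp.append_left p) ih

lemma DIn.append_right {v w : List (Symbol T g.NT)} {n : ℕ}
    (h : DIn g v w n) (p : List (Symbol T g.NT)) : DIn g (v ++ p) (w ++ p) n := by
  induction h with
  | refl => exact DIn.refl _
  | head hp _ ih => exact DIn.head (hp.append_right p) ih

lemma DIn.append {u₁ v₁ u₂ v₂ : List (Symbol T g.NT)} {m n : ℕ}
    (h₁ : DIn g u₁ v₁ m) (h₂ : DIn g u₂ v₂ n) :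
    DIn g (u₁ ++ u₂) (v₁ ++ v₂) (m + n) :=
  (h₁.append_right u₂).trans (h₂.append_left v₁)

lemma rewrites_nil {r : ContextFreeRule T g.NT} {v : List (Symbol T g.NT)} :
    ¬ r.Rewrites [] v := by
  intro h; cases h

lemma rewrites_map_terminal {r : ContextFreeRule T g.NT} {w : List T}
    {v : List (Symbol T g.NT)} : ¬ r.Rewrites (w.map Symbol.terminal) v := by
  induction w generalizing v with
  | nil => exact rewrites_nil
  | cons a t ih =>
      intro h
      cases h with
      | cons _ h' => exact ih h'

lemma din_map_terminal {w : List T} {v : List (Symbol T g.NT)} {n : ℕ}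
    (h : DIn g (w.map Symbol.terminal) v n) : v = w.map Symbol.terminal ∧ n = 0 := by
  cases h with
  | refl => exact ⟨rfl, rfl⟩
  | head hp _ =>
      obtain ⟨r, -, hr⟩ := hp
      exact absurd hr rewrites_map_terminal

lemma din_nil {v : List (Symbol T g.NT)} {n : ℕ} (h : DIn g [] v n) :
    v = [] ∧ n = 0 := by
  have := din_map_terminal (w := []) (by simpa using h)
  simpa using this

lemma rewrites_single_nt {r : ContextFreeRule T g.NT} {A : g.NT}
    {v : List (Symbol T g.NT)} (h : r.Rewrites [Symbol.nonterminal A] v) :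
    r.input = A ∧ v = r.output := by
  obtain ⟨p, q, h₁, h₂⟩ := h.exists_parts
  cases p with
  | nil =>
      cases q with
      | nil =>
          simp at h₁ h₂
          exact ⟨h₁.symm, by simp [h₂]⟩
      | cons b s => simp at h₁
  | cons a t => simp at h₁

lemma rewrites_split {r : ContextFreeRule T g.NT} {p q v : List (Symbol T g.NT)}
    (h : r.Rewrites (p ++ q) v) :
    (∃ p', r.Rewrites p p' ∧ v = p' ++ q) ∨ (∃ q', r.Rewrites q q' ∧ v = p ++ q') := by
  induction p generalizing v with
  | nil => exact Or.inr ⟨v, by simpa using h, by simp⟩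
  | cons a t ih =>
      cases h with
      | head s =>
          exact Or.inl ⟨r.output ++ t, by
            have := ContextFreeRule.Rewrites.head (r := r) t
            simpa using this, by simp⟩
      | cons x h' =>
          rcases ih h' with ⟨p', hp', rfl⟩ | ⟨q', hq', rfl⟩
          · exact Or.inl ⟨a :: p', hp'.cons a, by simp⟩
          · exact Or.inr ⟨q', hq', by simp⟩

lemma din_zero {u w : List (Symbol T g.NT)} (h : DIn g u w 0) : u = w := by
  cases h; rfl

lemma din_succ {u w : List (Symbol T g.NT)} {n : ℕ} (h : DIn g u w (n + 1)) :
    ∃ v, g.Produces u v ∧ DIn g v w n := by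
  cases h with
  | head hp h' => exact ⟨_, hp, h'⟩

lemma din_split {p q w : List (Symbol T g.NT)} {n : ℕ} (h : DIn g (p ++ q) w n) :
    ∃ w₁ w₂ n₁ n₂, w = w₁ ++ w₂ ∧ n₁ + n₂ = n ∧ DIn g p w₁ n₁ ∧ DIn g q w₂ n₂ := by
  induction n generalizing p q w with
  | zero =>
      exact ⟨p, q, 0, 0, (din_zero h).symm, rfl, DIn.refl p, DIn.refl q⟩
  | succ n ih =>
      obtain ⟨v, ⟨r, hr, hrw⟩, h'⟩ := din_succ h
      rcases rewrites_split hrw with ⟨p', hp', rfl⟩ | ⟨q', hq', rfl⟩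
      · obtain ⟨w₁, w₂, n₁, n₂, rfl, hn, d₁, d₂⟩ := ih h'
        exact ⟨w₁, w₂, n₁ + 1, n₂, rfl, by omega,
          DIn.head ⟨r, hr, hp'⟩ d₁, d₂⟩
      · obtain ⟨w₁, w₂, n₁, n₂, rfl, hn, d₁, d₂⟩ := ih h'
        exact ⟨w₁, w₂, n₁, n₂ + 1, rfl, by omega,
          d₁, DIn.head ⟨r, hr, hq'⟩ d₂⟩

lemma map_append_split {w : List T} {l₁ l₂ : List (Symbol T g.NT)}
    (h : w.map Symbol.terminal = l₁ ++ l₂) :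
    ∃ w₁ w₂, w = w₁ ++ w₂ ∧ l₁ = w₁.map Symbol.terminal ∧ l₂ = w₂.map Symbol.terminal := by
  rcases List.map_eq_append_iff.mp h with ⟨w₁, w₂, rfl, h₁, h₂⟩
  exact ⟨w₁, w₂, rfl, h₁.symm, h₂.symm⟩

lemma bigpart {l : List (Symbol T g.NT)} {w : List T} {n : ℕ}
    (h : DIn g l (w.map Symbol.terminal) n) (hw : 1 ≤ w.length) :
    ∃ l₁ s l₂ w₁ w' w₂ n₁ n' n₂,
      l = l₁ ++ [s] ++ l₂ ∧ w = w₁ ++ w' ++ w₂ ∧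
      DIn g l₁ (w₁.map Symbol.terminal) n₁ ∧ DIn g [s] (w'.map Symbol.terminal) n' ∧
      DIn g l₂ (w₂.map Symbol.terminal) n₂ ∧ n₁ + n' + n₂ ≤ n ∧
      w.length ≤ l.length * w'.length := by
  induction l generalizing w n with
  | nil =>
      obtain ⟨hw', -⟩ := din_nil h
      rw [List.eq_nil_iff_forall_not_mem] at hw'
      cases w with
      | nil => simp at hw
      | cons a t => exact absurd (hw' (Symbol.terminal a)) (by simp)
  | cons s t ih =>
      have h' : DIn g ([s] ++ t) (w.map Symbol.terminal) n := by simpa using h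
      obtain ⟨v₁, v₂, na, nb, hv, hn, d₁, d₂⟩ := din_split h'
      obtain ⟨wa, wb, rfl, rfl, rfl⟩ := map_append_split hv
      by_cases hwb : 1 ≤ wb.length
      · obtain ⟨l₁', s', l₂', w₁', w'', w₂', n₁', n'', n₂', hteq, hwbeq, e₁, e₂, e₃, hcnt, hbd⟩ :=
          ih d₂ hwb
        by_cases hcmp : w''.length ≤ wa.length
        · refine ⟨[], s, t, [], wa, wb, 0, na, nb, by simp, by simp, DIn.refl _, d₁, d₂, by omega, ?_⟩
          have h1 : wb.length ≤ t.length * w''.length := hbd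
          have h2 : t.length * w''.length ≤ t.length * wa.length :=
            Nat.mul_le_mul_left _ hcmp
          simp only [List.length_append, List.length_cons]
          calc wa.length + wb.length ≤ wa.length + t.length * wa.length := by omega
            _ = (t.length + 1) * wa.length := by ring
        · refine ⟨s :: l₁', s', l₂', wa ++ w₁', w'', w₂', na + n₁', n'', n₂',
            by rw [hteq]; simp, by rw [hwbeq]; simp, ?_, e₂, e₃, by omega, ?_⟩
          · have := d₁.append e₁
            simpa using this
          · have h1 : wb.length ≤ t.length * w''.length := hbd
            have h2 : wb.length = w₁'.length + w''.length + w₂'.length := by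
              rw [hwbeq]; simp; omega
            simp only [List.length_append, List.length_cons]
            have h3 : wa.length + wb.length ≤ w''.length + t.length * w''.length := by omega
            calc wa.length + wb.length ≤ w''.length + t.length * w''.length := h3
              _ = (t.length + 1) * w''.length := by ring
      · have hwb0 : wb = [] := by
          cases wb
          · rfl
          · simp at hwb
        subst hwb0
        refine ⟨[], s, t, [], wa, [], 0, na, nb, by simp, by simp, DIn.refl _, d₁,
          by simpa using d₂, by omega, ?_⟩
        have : 1 * wa.length ≤ (t.length + 1) * wa.length :=
          Nat.mul_le_mul_right _ (by omega)
        simp only [List.length_append, List.length_cons, List.length_nil]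
        omega

lemma DIn.subst {u p q α : List (Symbol T g.NT)} {C : g.NT} {k m : ℕ}
    (h₁ : DIn g u (p ++ [Symbol.nonterminal C] ++ q) k)
    (h₂ : DIn g [Symbol.nonterminal C] α m) :
    DIn g u (p ++ α ++ q) (k + m) :=
  h₁.trans ((h₂.append_left p).append_right q)

/-- Bound on rule lengths. -/
noncomputable def ruleBound (g : ContextFreeGrammar T) : ℕ :=
  (g.rules.sup fun r => r.output.length) + 1

lemma one_le_ruleBound : 1 ≤ ruleBound g := Nat.le_add_left 1 _

lemma output_le_ruleBound {r : ContextFreeRule T g.NT} (hr : r ∈ g.rules) :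
    r.output.length ≤ ruleBound g :=
  le_trans (Finset.le_sup (f := fun r => r.output.length) hr) (Nat.le_succ _)

open Classical in
/-- The finite set of rule inputs. -/
noncomputable def inputsF (g : ContextFreeGrammar T) : Finset g.NT :=
  g.rules.image ContextFreeRule.input

open Classical in
lemma input_mem {C : g.NT} {w' : List T} {m : ℕ}
    (h : DIn g [Symbol.nonterminal C] (w'.map Symbol.terminal) m) :
    C ∈ inputsF g := by
  cases m with
  | zero =>
      have h0 := din_zero h
      cases w' with
      | nil => simp at h0
      | cons a t => simp at h0
  | succ m =>
      obtain ⟨v, ⟨r, hr, hrw⟩, -⟩ := din_succ h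
      obtain ⟨hin, -⟩ := rewrites_single_nt hrw
      exact Finset.mem_image.mpr ⟨r, hr, hin⟩

open Classical in
lemma key : ∀ n : ℕ, ∀ {F : Finset g.NT} {A : g.NT} {w : List T},
    A ∈ F → DIn g [Symbol.nonterminal A] (w.map Symbol.terminal) n →
    (ruleBound g) ^ F.card < w.length →
    (∃ (B : g.NT) (u v x y z : List T) (n₁ n₂ n₃ : ℕ),
        w = u ++ v ++ x ++ y ++ z ∧
        DIn g [Symbol.nonterminal A]
          (u.map Symbol.terminal ++ [Symbol.nonterminal B] ++ z.map Symbol.terminal) n₁ ∧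
        DIn g [Symbol.nonterminal B]
          (v.map Symbol.terminal ++ [Symbol.nonterminal B] ++ y.map Symbol.terminal) n₂ ∧
        DIn g [Symbol.nonterminal B] (x.map Symbol.terminal) n₃ ∧
        1 ≤ n₂ ∧ n₁ + n₂ + n₃ ≤ n)
    ∨ (∃ (C : g.NT) (u z w' : List T) (k m : ℕ), C ∉ F.erase A ∧ w = u ++ w' ++ z ∧
        DIn g [Symbol.nonterminal A]
          (u.map Symbol.terminal ++ [Symbol.nonterminal C] ++ z.map Symbol.terminal) k ∧
        DIn g [Symbol.nonterminal C] (w'.map Symbol.terminal) m ∧ 1 ≤ k ∧ k + m ≤ n) := by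
  intro n
  induction n using Nat.strong_induction_on with
  | _ n IH =>
  intro F A w hAF h hlt
  have hM : 1 ≤ ruleBound g := one_le_ruleBound
  have hpow1 : 1 ≤ (ruleBound g) ^ F.card := Nat.one_le_pow _ _ (by omega)
  have hw2 : 2 ≤ w.length := by omega
  cases n with
  | zero =>
      have h0 := din_zero h
      have := congrArg List.length h0
      simp at this
      omega
  | succ n' =>
      obtain ⟨v₀, ⟨r, hr, hrw⟩, d⟩ := din_succ h
      obtain ⟨hin, rfl⟩ := rewrites_single_nt hrw
      obtain ⟨p₁, s, p₂, wA, w', wB, m₁, m', m₂, houteq, hweq, dA, ds, dB, hsum, hbd⟩ :=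
        bigpart d (by omega)
      have hout : r.output.length ≤ ruleBound g := output_le_ruleBound hr
      have hFc : 1 ≤ F.card := Finset.card_pos.mpr ⟨A, hAF⟩
      have hEc : (F.erase A).card = F.card - 1 := Finset.card_erase_of_mem hAF
      have hw' : (ruleBound g) ^ (F.erase A).card < w'.length := by
        have h1 : w.length ≤ (ruleBound g) * w'.length :=
          le_trans hbd (Nat.mul_le_mul_right _ hout)
        have h2 : (ruleBound g) * (ruleBound g) ^ (F.erase A).card < w.length := by
          rw [hEc]
          have : (ruleBound g) * (ruleBound g) ^ (F.card - 1) = (ruleBound g) ^ F.card := by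
            rw [← pow_succ']
            congr 1
            omega
          omega
        have := lt_of_lt_of_le h2 h1
        exact lt_of_mul_lt_mul_left this (Nat.zero_le _)
      have hpow1' : 1 ≤ (ruleBound g) ^ (F.erase A).card := Nat.one_le_pow _ _ (by omega)
      have hw'2 : 2 ≤ w'.length := by omega
      -- the big part must be a nonterminal
      obtain ⟨C⟩ : ∃ C, s = Symbol.nonterminal C := by
        cases s with
        | terminal t =>
            exfalso
            have : (w'.map Symbol.terminal) = [t].map Symbol.terminal ∧ m' = 0 :=
              din_map_terminal (by simpa using ds)
            have hl := congrArg List.length this.1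
            simp at hl
            omega
        | nonterminal C => exact ⟨C, rfl⟩
      subst ‹s = Symbol.nonterminal C›
      -- context derivation down to C
      have step1 : DIn g [Symbol.nonterminal A] r.output 1 := by
        refine DIn.head ⟨r, hr, ?_⟩ (DIn.refl _)
        rw [← hin]
        exact ContextFreeRule.Rewrites.input_output
      have dmid : DIn g r.output
          (wA.map Symbol.terminal ++ [Symbol.nonterminal C] ++ wB.map Symbol.terminal)
          (m₁ + (0 + m₂)) := by
        rw [houteq]
        simpa [List.append_assoc] using dA.append ((DIn.refl [Symbol.nonterminal C]).append dB)
      have dctx : DIn g [Symbol.nonterminal A]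
          (wA.map Symbol.terminal ++ [Symbol.nonterminal C] ++ wB.map Symbol.terminal)
          (1 + (m₁ + (0 + m₂))) := step1.trans dmid
      by_cases hC : C ∈ F.erase A
      · rcases IH m' (by omega) hC ds hw' with
          ⟨B, u₂, v, x, y, z₂, k₁, k₂, k₃, hw'eq, c₁, c₂, c₃, hk₂, hksum⟩ |
          ⟨D, u', z', w'', k', m'', hD, hw'eq, ec, ei, hk'1, hk'sum⟩
        · left
          refine ⟨B, wA ++ u₂, v, x, y, z₂ ++ wB, 1 + (m₁ + (0 + m₂)) + k₁, k₂, k₃,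
            by rw [hweq, hw'eq]; simp, ?_, c₂, c₃, hk₂, by omega⟩
          have := dctx.subst c₁
          simpa [List.map_append, List.append_assoc] using this
        · by_cases hDC : D = C
          · subst hDC
            left
            refine ⟨D, wA, u', w'', z', wB, 1 + (m₁ + (0 + m₂)), k', m'',
              by rw [hweq, hw'eq]; simp, dctx, ec, ei, hk'1, by omega⟩
          · right
            have hDF : D ∉ F.erase A := by
              intro hmem
              exact hD (Finset.mem_erase.mpr ⟨hDC, hmem⟩)
            refine ⟨D, wA ++ u', z' ++ wB, w'', 1 + (m₁ + (0 + m₂)) + k', m'',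
              hDF, by rw [hweq, hw'eq]; simp, ?_, ei, by omega, by omega⟩
            have := dctx.subst ec
            simpa [List.map_append, List.append_assoc] using this
      · right
        exact ⟨C, wA, wB, w', 1 + (m₁ + (0 + m₂)), m', hC, hweq, dctx, ds,
          by omega, by omega⟩

lemma descent (sc : ℕ) : ∀ n : ℕ, ∀ {A : g.NT} {w : List T},
    DIn g [Symbol.nonterminal A] (w.map Symbol.terminal) n →
    (ruleBound g) ^ (sc + 1) < w.length →
    ∃ (C : g.NT) (u z w' : List T) (k m : ℕ), w = u ++ w' ++ z ∧
      DIn g [Symbol.nonterminal A]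
        (u.map Symbol.terminal ++ [Symbol.nonterminal C] ++ z.map Symbol.terminal) k ∧
      DIn g [Symbol.nonterminal C] (w'.map Symbol.terminal) m ∧ k + m ≤ n ∧
      (ruleBound g) ^ sc < w'.length ∧ w'.length ≤ (ruleBound g) ^ (sc + 1) := by
  intro n
  induction n using Nat.strong_induction_on with
  | _ n IH =>
  intro A w h hlt
  have hM : 1 ≤ ruleBound g := one_le_ruleBound
  have hpow1 : 1 ≤ (ruleBound g) ^ (sc + 1) := Nat.one_le_pow _ _ (by omega)
  have hw2 : 2 ≤ w.length := by omega
  cases n with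
  | zero =>
      have h0 := din_zero h
      have := congrArg List.length h0
      simp at this
      omega
  | succ n' =>
      obtain ⟨v₀, ⟨r, hr, hrw⟩, d⟩ := din_succ h
      obtain ⟨hin, rfl⟩ := rewrites_single_nt hrw
      obtain ⟨p₁, s, p₂, wA, w', wB, m₁, m', m₂, houteq, hweq, dA, ds, dB, hsum, hbd⟩ :=
        bigpart d (by omega)
      have hout : r.output.length ≤ ruleBound g := output_le_ruleBound hr
      have hw' : (ruleBound g) ^ sc < w'.length := by
        have h1 : w.length ≤ (ruleBound g) * w'.length :=
          le_trans hbd (Nat.mul_le_mul_right _ hout)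
        have h2 : (ruleBound g) * (ruleBound g) ^ sc < w.length := by
          have : (ruleBound g) * (ruleBound g) ^ sc = (ruleBound g) ^ (sc + 1) := by
            rw [← pow_succ']
          omega
        have := lt_of_lt_of_le h2 h1
        exact lt_of_mul_lt_mul_left this (Nat.zero_le _)
      have hpow1' : 1 ≤ (ruleBound g) ^ sc := Nat.one_le_pow _ _ (by omega)
      have hw'2 : 2 ≤ w'.length := by omega
      obtain ⟨C⟩ : ∃ C, s = Symbol.nonterminal C := by
        cases s with
        | terminal t =>
            exfalso
            have : (w'.map Symbol.terminal) = [t].map Symbol.terminal ∧ m' = 0 :=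
              din_map_terminal (by simpa using ds)
            have hl := congrArg List.length this.1
            simp at hl
            omega
        | nonterminal C => exact ⟨C, rfl⟩
      subst ‹s = Symbol.nonterminal C›
      have step1 : DIn g [Symbol.nonterminal A] r.output 1 := by
        refine DIn.head ⟨r, hr, ?_⟩ (DIn.refl _)
        rw [← hin]
        exact ContextFreeRule.Rewrites.input_output
      have dmid : DIn g r.output
          (wA.map Symbol.terminal ++ [Symbol.nonterminal C] ++ wB.map Symbol.terminal)
          (m₁ + (0 + m₂)) := by
        rw [houteq]
        simpa [List.append_assoc] using dA.append ((DIn.refl [Symbol.nonterminal C]).append dB)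
      have dctx : DIn g [Symbol.nonterminal A]
          (wA.map Symbol.terminal ++ [Symbol.nonterminal C] ++ wB.map Symbol.terminal)
          (1 + (m₁ + (0 + m₂))) := step1.trans dmid
      by_cases hsmall : w'.length ≤ (ruleBound g) ^ (sc + 1)
      · exact ⟨C, wA, wB, w', 1 + (m₁ + (0 + m₂)), m', hweq, dctx, ds, by omega, hw', hsmall⟩
      · obtain ⟨C', u', z', w'', k', m'', hw'eq, ec, ei, hk'sum, hbig, hsmall'⟩ :=
          IH m' (by omega) ds (by omega)
        refine ⟨C', wA ++ u', z' ++ wB, w'', 1 + (m₁ + (0 + m₂)) + k', m'',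
          by rw [hweq, hw'eq]; simp, ?_, ei, by omega, hbig, hsmall'⟩
        have := dctx.subst ec
        simpa [List.map_append, List.append_assoc] using this

open Classical in
theorem cfg_pumping (g : ContextFreeGrammar T) :
    ∃ K : ℕ, 1 ≤ K ∧ ∀ w ∈ g.language, K < w.length →
      ∃ u v x y z : List T, w = u ++ v ++ x ++ y ++ z ∧
        v.length + x.length + y.length ≤ K ∧ 1 ≤ v.length + y.length ∧
        u ++ x ++ z ∈ g.language ∧ u ++ v ++ v ++ x ++ y ++ y ++ z ∈ g.language := by
  classical
  set M := ruleBound g with hMdef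
  set sc := (inputsF g).card with hscdef
  have hM : 1 ≤ M := one_le_ruleBound
  refine ⟨M ^ (sc + 1), Nat.one_le_pow _ _ (by omega), ?_⟩
  intro w hw hlen
  rw [ContextFreeGrammar.mem_language_iff] at hw
  have hex : ∃ n, DIn g [Symbol.nonterminal g.initial] (w.map Symbol.terminal) n :=
    derives_toDIn hw
  set n := Nat.find hex with hndef
  have hn : DIn g [Symbol.nonterminal g.initial] (w.map Symbol.terminal) n :=
    Nat.find_spec hex
  obtain ⟨C, u₀, z₀, ws, k₀, m₀, hweq, d0, dws, hkm, hbig, hsmall⟩ :=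
    descent sc n hn hlen
  have hCmem : C ∈ inputsF g := input_mem dws
  -- get the pump structure at C
  obtain ⟨B, u₁, v, x, y, z₁, p₁, p₂, p₃, hwse, c₁, c₂, c₃, hp₂, hpsum⟩ :
      ∃ (B : g.NT) (u₁ v x y z₁ : List T) (p₁ p₂ p₃ : ℕ),
        ws = u₁ ++ v ++ x ++ y ++ z₁ ∧
        DIn g [Symbol.nonterminal C]
          (u₁.map Symbol.terminal ++ [Symbol.nonterminal B] ++ z₁.map Symbol.terminal) p₁ ∧
        DIn g [Symbol.nonterminal B]
          (v.map Symbol.terminal ++ [Symbol.nonterminal B] ++ y.map Symbol.terminal) p₂ ∧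
        DIn g [Symbol.nonterminal B] (x.map Symbol.terminal) p₃ ∧
        1 ≤ p₂ ∧ p₁ + p₂ + p₃ ≤ m₀ := by
    rcases key m₀ hCmem dws hbig with
      ⟨B, u₁, v, x, y, z₁, p₁, p₂, p₃, hwse, c₁, c₂, c₃, hp₂, hpsum⟩ |
      ⟨D, u', z', w'', k', m'', hD, hwse, ec, ei, hk'1, hk'sum⟩
    · exact ⟨B, u₁, v, x, y, z₁, p₁, p₂, p₃, hwse, c₁, c₂, c₃, hp₂, hpsum⟩
    · have hDS : D ∈ inputsF g := input_mem ei
      have hDC : D = C := by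
        by_contra hne
        exact hD (Finset.mem_erase.mpr ⟨hne, hDS⟩)
      subst hDC
      refine ⟨D, [], u', w'', z', [], 0, k', m'', by simpa using hwse,
        by simpa using DIn.refl [Symbol.nonterminal D], ec, ei, hk'1, by omega⟩
  -- assemble
  refine ⟨u₀ ++ u₁, v, x, y, z₁ ++ z₀, by rw [hweq, hwse]; simp, ?_, ?_, ?_, ?_⟩
  · have h1 : ws.length ≤ M ^ (sc + 1) := hsmall
    have h2 : ws.length = u₁.length + v.length + x.length + y.length + z₁.length := by
      rw [hwse]; simp; omega
    omega
  · -- nontrivial loop, via minimality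
    by_contra hzero
    push_neg at hzero
    have hv : v = [] := List.length_eq_zero_iff.mp (by omega)
    have hy : y = [] := List.length_eq_zero_iff.mp (by omega)
    subst hv hy
    have s1 := d0.subst c₁
    have e : u₀.map Symbol.terminal ++
        (u₁.map Symbol.terminal ++ [Symbol.nonterminal B] ++ z₁.map Symbol.terminal) ++
        z₀.map Symbol.terminal
        = (u₀ ++ u₁).map Symbol.terminal ++ [Symbol.nonterminal B] ++
          (z₁ ++ z₀).map Symbol.terminal := by simp
    rw [e] at s1
    have s2 := s1.subst c₃
    have e2 : (u₀ ++ u₁).map (Symbol.terminal : T → Symbol T g.NT) ++ x.map Symbol.terminal ++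
        (z₁ ++ z₀).map Symbol.terminal = w.map Symbol.terminal := by
      rw [hweq, hwse]; simp
    rw [e2] at s2
    have hlt : k₀ + p₁ + p₃ < n := by omega
    exact Nat.find_min hex hlt s2
  · -- i = 0 membership
    have s1 := d0.subst c₁
    have e : u₀.map Symbol.terminal ++
        (u₁.map Symbol.terminal ++ [Symbol.nonterminal B] ++ z₁.map Symbol.terminal) ++
        z₀.map Symbol.terminal
        = (u₀ ++ u₁).map Symbol.terminal ++ [Symbol.nonterminal B] ++
          (z₁ ++ z₀).map Symbol.terminal := by simp
    rw [e] at s1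
    have s2 := s1.subst c₃
    rw [ContextFreeGrammar.mem_language_iff]
    have e2 : (u₀ ++ u₁).map (Symbol.terminal : T → Symbol T g.NT) ++ x.map Symbol.terminal ++
        (z₁ ++ z₀).map Symbol.terminal = ((u₀ ++ u₁) ++ x ++ (z₁ ++ z₀)).map Symbol.terminal := by
      simp
    rw [e2] at s2
    exact s2.toDerives
  · -- i = 2 membership
    have s1 := d0.subst c₁
    have e : u₀.map Symbol.terminal ++
        (u₁.map Symbol.terminal ++ [Symbol.nonterminal B] ++ z₁.map Symbol.terminal) ++
        z₀.map Symbol.terminal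
        = (u₀ ++ u₁).map Symbol.terminal ++ [Symbol.nonterminal B] ++
          (z₁ ++ z₀).map Symbol.terminal := by simp
    rw [e] at s1
    have t2 := s1.subst c₂
    have e3 : (u₀ ++ u₁).map Symbol.terminal ++
        (v.map Symbol.terminal ++ [Symbol.nonterminal B] ++ y.map Symbol.terminal) ++
        (z₁ ++ z₀).map Symbol.terminal
        = (u₀ ++ u₁ ++ v).map Symbol.terminal ++ [Symbol.nonterminal B] ++
          (y ++ (z₁ ++ z₀)).map Symbol.terminal := by simp
    rw [e3] at t2
    have t3 := t2.subst c₂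
    have e4 : (u₀ ++ u₁ ++ v).map Symbol.terminal ++
        (v.map Symbol.terminal ++ [Symbol.nonterminal B] ++ y.map Symbol.terminal) ++
        (y ++ (z₁ ++ z₀)).map Symbol.terminal
        = (u₀ ++ u₁ ++ v ++ v).map Symbol.terminal ++ [Symbol.nonterminal B] ++
          (y ++ (y ++ (z₁ ++ z₀))).map Symbol.terminal := by simp
    rw [e4] at t3
    have t4 := t3.subst c₃
    rw [ContextFreeGrammar.mem_language_iff]
    have e5 : (u₀ ++ u₁ ++ v ++ v).map (Symbol.terminal : T → Symbol T g.NT) ++ x.map Symbol.terminal ++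
        (y ++ (y ++ (z₁ ++ z₀))).map Symbol.terminal
        = ((u₀ ++ u₁) ++ v ++ v ++ x ++ y ++ y ++ (z₁ ++ z₀)).map Symbol.terminal := by simp
    rw [e5] at t4
    exact t4.toDerives

open List

abbrev Lset : Set (List (Fin 2)) := {w : List (Fin 2) | ∃ p q r : ℕ,
      1 ≤ p ∧ 1 ≤ q ∧ 1 ≤ r ∧ ((q < p ∧ r < p) ∨ (p = r ∧ q ≤ p)) ∧
      w = List.replicate p 0 ++ List.replicate q 1 ++ List.replicate r 0}

def lz (w : List (Fin 2)) : ℕ := (w.takeWhile (· == 0)).length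

def tz (w : List (Fin 2)) : ℕ := lz w.reverse

lemma lz_rep0_app (m : ℕ) (t : List (Fin 2)) : lz (replicate m 0 ++ t) = m + lz t := by
  induction m with
  | zero => simp
  | succ k ih =>
      rw [replicate_succ]
      simp only [cons_append, lz, takeWhile_cons]
      norm_num
      have := ih
      simp only [lz] at this
      omega

lemma lz_rep1_app (m : ℕ) (hm : 1 ≤ m) (t : List (Fin 2)) :
    lz (replicate m 1 ++ t) = 0 := by
  cases m with
  | zero => omega
  | succ k =>
      rw [replicate_succ]
      simp [lz, takeWhile_cons]

lemma lz_canon (p q r : ℕ) (hq : 1 ≤ q) :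
    lz (replicate p (0 : Fin 2) ++ replicate q 1 ++ replicate r 0) = p := by
  rw [append_assoc, lz_rep0_app, lz_rep1_app q hq]
  omega

lemma count_canon (p q r : ℕ) :
    count 1 (replicate p (0 : Fin 2) ++ replicate q 1 ++ replicate r 0) = q := by
  simp [count_append, count_replicate]

lemma tz_canon (p q r : ℕ) (hq : 1 ≤ q) :
    tz (replicate p (0 : Fin 2) ++ replicate q 1 ++ replicate r 0) = r := by
  unfold tz
  rw [reverse_append, reverse_append, reverse_replicate, reverse_replicate, reverse_replicate,
    ← append_assoc]
  exact lz_canon r q p hq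

lemma L_elim {P Q Rr : ℕ}
    (h : (replicate P (0 : Fin 2) ++ replicate Q 1 ++ replicate Rr 0) ∈ Lset) :
    1 ≤ P ∧ 1 ≤ Q ∧ 1 ≤ Rr ∧ ((Q < P ∧ Rr < P) ∨ (P = Rr ∧ Q ≤ P)) := by
  obtain ⟨p, q, r, hp, hq, hr, hc, heq⟩ := h
  have hcnt := congrArg (count 1) heq
  rw [count_canon, count_canon] at hcnt
  have hQ : 1 ≤ Q := by omega
  have hlz := congrArg lz heq
  rw [lz_canon P Q Rr hQ, lz_canon p q r hq] at hlz
  have hlen := congrArg length heq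
  simp only [length_append, length_replicate] at hlen
  subst hlz
  refine ⟨by omega, hQ, by omega, ?_⟩
  have : Rr = r := by omega
  have : Q = q := by omega
  subst ‹Rr = r› ‹Q = q›
  exact hc

lemma not101 {w : List (Fin 2)} (h : w ∈ Lset) :
    ¬ ([1, 0, 1] : List (Fin 2)).Sublist w := by
  obtain ⟨p, q, r, hp, hq, hr, hc, rfl⟩ := h
  intro hsub
  rw [append_assoc] at hsub
  rw [sublist_append_iff] at hsub
  obtain ⟨l₁, l₂, he, h₁, h₂⟩ := hsub
  have h₁0 : ∀ a ∈ l₁, a = 0 := fun a ha => eq_of_mem_replicate (h₁.subset ha)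
  cases l₁ with
  | cons a t =>
      have : a = (1 : Fin 2) := by
        have := congrArg (fun l => l.head?) he
        simp at this
        exact this.symm
      have := h₁0 a (by simp)
      rw [this] at ‹a = 1›
      exact absurd ‹(0 : Fin 2) = 1› (by decide)
  | nil =>
      simp at he
      subst he
      rw [sublist_append_iff] at h₂
      obtain ⟨m₁, m₂, he2, g₁, g₂⟩ := h₂
      have g₁1 : ∀ a ∈ m₁, a = 1 := fun a ha => eq_of_mem_replicate (g₁.subset ha)
      have g₂0 : ∀ a ∈ m₂, a = 0 := fun a ha => eq_of_mem_replicate (g₂.subset ha)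
      cases m₁ with
      | nil =>
          simp at he2
          subst he2
          have := g₂0 1 (by simp)
          exact absurd this (by decide)
      | cons a t =>
          cases t with
          | nil =>
              have : m₂ = [0, 1] := by
                have h := congrArg List.tail he2
                simp at h
                exact h.symm
              have := g₂0 1 (by rw [this]; simp)
              exact absurd this (by decide)
          | cons b t' =>
              have hb : b = (0 : Fin 2) := by
                have := congrArg (fun l => l.tail.head?) he2
                simp at this
                exact this.symm
              have := g₁1 b (by simp)
              rw [this] at hb
              exact absurd hb (by decide)

lemma slice3 (N s l : ℕ) :
    (((replicate N (0 : Fin 2) ++ replicate N 1 ++ replicate N 0).drop s).take l)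
    = replicate (min l (N - s)) 0
      ++ replicate (min (l - (N - s)) (N - (s - N))) 1
      ++ replicate (min (l - (N - s) - (N - (s - N))) (N - (s - 2 * N))) 0 := by
  rw [drop_append, drop_append,
    take_append, take_append]
  simp only [drop_replicate, take_replicate, length_append, length_replicate, length_drop,
    length_take]
  congr 2
  omega
-- main theorem part (appended after a.lean and b.lean contents)

lemma rep_merge {α : Type} (m n : ℕ) (a : α) (t : List α) :
    List.replicate m a ++ (List.replicate n a ++ t) = List.replicate (m+n) a ++ t := by
  rw [← List.append_assoc, ← List.replicate_add]

lemma slice_form (N s l : ℕ) (hsl : s + l ≤ 3*N) (i j k : ℕ)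
    (hi : i = min (s+l) N - min s N)
    (hj : j = min (max (s+l) N) (2*N) - min (max s N) (2*N))
    (hk : k = l - i - j) :
    ((List.replicate N (0 : Fin 2) ++ List.replicate N 1 ++ List.replicate N 0).drop s).take l
    = List.replicate i 0 ++ List.replicate j 1 ++ List.replicate k 0 := by
  have e1 : i = min l (N - s) := by omega
  have e2 : j = min (l - (N - s)) (N - (s - N)) := by omega
  have e3 : k = min (l - (N - s) - (N - (s - N))) (N - (s - 2 * N)) := by omega
  rw [slice3, e1, e2, e3]

lemma sub101a {α β : ℕ} (hα : 1 ≤ α) (hβ : 1 ≤ β) :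
    ([1, 0, 1] : List (Fin 2)).Sublist
      ((List.replicate α (0 : Fin 2) ++ List.replicate β 1)
        ++ (List.replicate α 0 ++ List.replicate β 1)) := by
  have h1 : ([1] : List (Fin 2)).Sublist (List.replicate α (0:Fin 2) ++ List.replicate β 1) := by
    have : ([1] : List (Fin 2)).Sublist (List.replicate β 1) := by
      have := (List.replicate_sublist_replicate (1 : Fin 2) (m := 1) (n := β)).mpr hβ
      simpa using this
    exact this.trans (List.sublist_append_right _ _)
  have h2 : ([0, 1] : List (Fin 2)).Sublist
      (List.replicate α (0:Fin 2) ++ List.replicate β 1) := by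
    have ha : ([0] : List (Fin 2)).Sublist (List.replicate α 0) := by
      have := (List.replicate_sublist_replicate (0 : Fin 2) (m := 1) (n := α)).mpr hα
      simpa using this
    have hb : ([1] : List (Fin 2)).Sublist (List.replicate β 1) := by
      have := (List.replicate_sublist_replicate (1 : Fin 2) (m := 1) (n := β)).mpr hβ
      simpa using this
    simpa using ha.append hb
  simpa using h1.append h2

lemma sub101b {α β : ℕ} (hα : 1 ≤ α) (hβ : 1 ≤ β) :
    ([1, 0, 1] : List (Fin 2)).Sublist
      ((List.replicate α (1 : Fin 2) ++ List.replicate β 0)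
        ++ (List.replicate α 1 ++ List.replicate β 0)) := by
  have h1 : ([1, 0] : List (Fin 2)).Sublist
      (List.replicate α (1:Fin 2) ++ List.replicate β 0) := by
    have ha : ([1] : List (Fin 2)).Sublist (List.replicate α 1) := by
      have := (List.replicate_sublist_replicate (1 : Fin 2) (m := 1) (n := α)).mpr hα
      simpa using this
    have hb : ([0] : List (Fin 2)).Sublist (List.replicate β 0) := by
      have := (List.replicate_sublist_replicate (0 : Fin 2) (m := 1) (n := β)).mpr hβ
      simpa using this
    simpa using ha.append hb
  have h2 : ([1] : List (Fin 2)).Sublist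
      (List.replicate α (1:Fin 2) ++ List.replicate β 0) := by
    have : ([1] : List (Fin 2)).Sublist (List.replicate α 1) := by
      have := (List.replicate_sublist_replicate (1 : Fin 2) (m := 1) (n := α)).mpr hα
      simpa using this
    exact this.trans (List.sublist_append_left _ _)
  simpa using h1.append h2

/-- The language `{ a^p c^q a^r : p,q,r ≥ 1, (p > q ∧ p > r) ∨ (p = r ∧ p ≥ q) }`
(with `a = 0`, `c = 1` over a two-letter alphabet) is not context-free. -/
theorem not_contextFree_ap_cq_ar :
    ¬ Language.IsContextFree {w : List (Fin 2) | ∃ p q r : ℕ,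
      1 ≤ p ∧ 1 ≤ q ∧ 1 ≤ r ∧ ((q < p ∧ r < p) ∨ (p = r ∧ q ≤ p)) ∧
      w = List.replicate p 0 ++ List.replicate q 1 ++ List.replicate r 0} := by
  rintro ⟨g, hg⟩
  obtain ⟨K, hK1, hpump⟩ := cfg_pumping g
  set N := K + 1 with hN
  set W : List (Fin 2) :=
    List.replicate N 0 ++ List.replicate N 1 ++ List.replicate N 0 with hW
  have hWmem : W ∈ g.language := by
    rw [hg]
    exact ⟨N, N, N, by omega, by omega, by omega, Or.inr ⟨rfl, le_rfl⟩, rfl⟩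
  have hWlen : W.length = 3 * N := by simp [hW]; omega
  obtain ⟨u, v, x, y, z, hWeq, hbnd, hposvy, hm0, hm2⟩ :=
    hpump W hWmem (by omega)
  rw [hg] at hm0 hm2
  set a := u.length with ha
  set b := v.length with hb
  set c := x.length with hc
  set d := y.length with hd
  set e := z.length with he
  have hsum : a + b + c + d + e = 3 * N := by
    have := congrArg List.length hWeq
    simp at this
    omega
  have hWeq' : W = u ++ (v ++ (x ++ (y ++ z))) := by
    rw [hWeq]; simp [List.append_assoc]
  -- piece extraction
  have hu0 : u = (W.drop 0).take a := by
    rw [List.drop_zero, hWeq', ha]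
    exact List.take_left.symm
  have hv0 : v = (W.drop a).take b := by
    have h1 : W.drop a = v ++ (x ++ (y ++ z)) := by
      rw [hWeq', ha]; exact List.drop_left
    rw [h1, hb]
    exact List.take_left.symm
  have hx0 : x = (W.drop (a + b)).take c := by
    have h1 : W.drop (a + b) = x ++ (y ++ z) := by
      have h2 : W = (u ++ v) ++ (x ++ (y ++ z)) := by rw [hWeq]; simp [List.append_assoc]
      rw [h2, show a + b = (u ++ v).length by simp only [List.length_append, ← ha, ← hb]]
      exact List.drop_left
    rw [h1, hc]
    exact List.take_left.symm
  have hy0 : y = (W.drop (a + b + c)).take d := by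
    have h1 : W.drop (a + b + c) = y ++ z := by
      have h2 : W = (u ++ v ++ x) ++ (y ++ z) := by rw [hWeq]; simp [List.append_assoc]
      rw [h2, show a + b + c = (u ++ v ++ x).length by simp only [List.length_append, ← ha, ← hb, ← hc]]
      exact List.drop_left
    rw [h1, hd]
    exact List.take_left.symm
  have hz0 : z = (W.drop (a + b + c + d)).take e := by
    have h1 : W.drop (a + b + c + d) = z := by
      have h2 : W = (u ++ v ++ x ++ y) ++ z := hWeq
      rw [h2, show a + b + c + d = (u ++ v ++ x ++ y).length by simp only [List.length_append, ← ha, ← hb, ← hc, ← hd]]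
      exact List.drop_left
    rw [h1, he]
    exact (List.take_length (l := z)).symm
  rw [hW] at hu0 hv0 hx0 hy0 hz0
  by_cases hA : a + b + c + d ≤ 2 * N
  · -- window within first two blocks
    by_cases hvp0 : a + b ≤ N
    · by_cases hyp0 : a + b + c + d ≤ N
      · -- (0,0) : pump down
        have hu : u = List.replicate a (0 : Fin 2) := by
          rw [hu0, slice_form N 0 a (by omega) a 0 0 (by omega) (by omega) (by omega)]; simp
        have hx : x = List.replicate c (0 : Fin 2) := by
          rw [hx0, slice_form N (a+b) c (by omega) c 0 0 (by omega) (by omega) (by omega)]; simp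
        have hz : z = List.replicate (N - (a+b+c+d)) (0:Fin 2) ++ List.replicate N 1
            ++ List.replicate N 0 := by
          rw [hz0, slice_form N (a+b+c+d) e (by omega) (N - (a+b+c+d)) N N
            (by omega) (by omega) (by omega)]
        have hword : u ++ x ++ z = List.replicate (a + c + (N - (a+b+c+d))) (0:Fin 2)
            ++ List.replicate N 1 ++ List.replicate N 0 := by
          rw [hu, hx, hz]
          simp only [List.append_assoc, rep_merge, ← List.replicate_add]
        rw [hword] at hm0
        have := L_elim hm0
        omega
      · by_cases hyp1 : N ≤ a + b + c
        · -- (0,1) : v pure 0, y pure 1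
          have hu : u = List.replicate a (0 : Fin 2) := by
            rw [hu0, slice_form N 0 a (by omega) a 0 0 (by omega) (by omega) (by omega)]; simp
          have hv : v = List.replicate b (0 : Fin 2) := by
            rw [hv0, slice_form N a b (by omega) b 0 0 (by omega) (by omega) (by omega)]; simp
          have hx : x = List.replicate (N - (a+b)) (0:Fin 2)
              ++ List.replicate (a+b+c - N) 1 := by
            rw [hx0, slice_form N (a+b) c (by omega) (N - (a+b)) (a+b+c-N) 0
              (by omega) (by omega) (by omega)]; simp
          have hy : y = List.replicate d (1 : Fin 2) := by
            rw [hy0, slice_form N (a+b+c) d (by omega) 0 d 0 (by omega) (by omega) (by omega)]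
            simp
          have hz : z = List.replicate (2*N - (a+b+c+d)) (1:Fin 2)
              ++ List.replicate N 0 := by
            rw [hz0, slice_form N (a+b+c+d) e (by omega) 0 (2*N - (a+b+c+d)) N
              (by omega) (by omega) (by omega)]; simp
          by_cases hbpos : 1 ≤ b
          · -- pump down
            have hword : u ++ x ++ z = List.replicate (a + (N - (a+b))) (0:Fin 2)
                ++ List.replicate ((a+b+c-N) + (2*N - (a+b+c+d))) 1
                ++ List.replicate N 0 := by
              rw [hu, hx, hz]
              simp only [List.append_assoc, rep_merge, ← List.replicate_add]
            rw [hword] at hm0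
            have := L_elim hm0
            omega
          · -- b = 0, pump up
            have hword : u ++ v ++ v ++ x ++ y ++ y ++ z
                = List.replicate (a + (N - (a+b))) (0:Fin 2)
                ++ List.replicate (a+b+c-N + d + d + (2*N - (a+b+c+d))) 1
                ++ List.replicate N 0 := by
              have hv' : v = ([] : List (Fin 2)) := by
                rw [hv, show b = 0 by omega]; simp
              rw [hu, hv', hx, hy, hz]
              simp only [List.append_assoc, rep_merge, ← List.replicate_add, List.append_nil,
                List.nil_append]
            rw [hword] at hm2
            have := L_elim hm2
            omega
        · -- (0,span) : y spans, pump down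
          have hu : u = List.replicate a (0 : Fin 2) := by
            rw [hu0, slice_form N 0 a (by omega) a 0 0 (by omega) (by omega) (by omega)]; simp
          have hx : x = List.replicate c (0 : Fin 2) := by
            rw [hx0, slice_form N (a+b) c (by omega) c 0 0 (by omega) (by omega) (by omega)]
            simp
          have hz : z = List.replicate (2*N - (a+b+c+d)) (1:Fin 2)
              ++ List.replicate N 0 := by
            rw [hz0, slice_form N (a+b+c+d) e (by omega) 0 (2*N - (a+b+c+d)) N
              (by omega) (by omega) (by omega)]; simp
          have hword : u ++ x ++ z = List.replicate (a + c) (0:Fin 2)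
              ++ List.replicate (2*N - (a+b+c+d)) 1 ++ List.replicate N 0 := by
            rw [hu, hx, hz]
            simp only [List.append_assoc, rep_merge, ← List.replicate_add]
          rw [hword] at hm0
          have := L_elim hm0
          omega
    · by_cases hvp1 : N ≤ a
      · -- (1,1) : pump up
        have hu : u = List.replicate N (0:Fin 2) ++ List.replicate (a - N) 1 := by
          rw [hu0, slice_form N 0 a (by omega) N (a - N) 0 (by omega) (by omega) (by omega)]
          simp
        have hv : v = List.replicate b (1 : Fin 2) := by
          rw [hv0, slice_form N a b (by omega) 0 b 0 (by omega) (by omega) (by omega)]; simp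
        have hx : x = List.replicate c (1 : Fin 2) := by
          rw [hx0, slice_form N (a+b) c (by omega) 0 c 0 (by omega) (by omega) (by omega)]; simp
        have hy : y = List.replicate d (1 : Fin 2) := by
          rw [hy0, slice_form N (a+b+c) d (by omega) 0 d 0 (by omega) (by omega) (by omega)]
          simp
        have hz : z = List.replicate (2*N - (a+b+c+d)) (1:Fin 2) ++ List.replicate N 0 := by
          rw [hz0, slice_form N (a+b+c+d) e (by omega) 0 (2*N - (a+b+c+d)) N
            (by omega) (by omega) (by omega)]; simp
        have hword : u ++ v ++ v ++ x ++ y ++ y ++ z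
            = List.replicate N (0:Fin 2)
            ++ List.replicate (a-N + b + b + c + d + d + (2*N - (a+b+c+d))) 1
            ++ List.replicate N 0 := by
          rw [hu, hv, hx, hy, hz]
          simp only [List.append_assoc, rep_merge, ← List.replicate_add]
        rw [hword] at hm2
        have := L_elim hm2
        omega
      · -- (span, _) : v spans the 0/1 boundary; use the 101 pattern
        have hv : v = List.replicate (N - a) (0:Fin 2) ++ List.replicate (a+b-N) 1 := by
          rw [hv0, slice_form N a b (by omega) (N-a) (a+b-N) 0
            (by omega) (by omega) (by omega)]; simp
        have hsub : ([1,0,1] : List (Fin 2)).Sublist (u ++ v ++ v ++ x ++ y ++ y ++ z) := by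
          have h1 : ([1,0,1] : List (Fin 2)).Sublist (v ++ v) := by
            rw [hv]
            exact sub101a (by omega) (by omega)
          have h2 : (v ++ v).Sublist (u ++ v ++ v ++ x ++ y ++ y ++ z) := by
            have e1 : u ++ v ++ v ++ x ++ y ++ y ++ z
                = u ++ ((v ++ v) ++ (x ++ (y ++ (y ++ z)))) := by
              simp [List.append_assoc]
            rw [e1]
            exact ((List.sublist_append_left (v ++ v) _).trans
              (List.sublist_append_right u _))
          exact h1.trans h2
        exact not101 hm2 hsub
  · -- window within last two blocks
    have hB : N + 2 ≤ a := by omega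
    by_cases hvp1 : a + b ≤ 2 * N
    · by_cases hyp1 : a + b + c + d ≤ 2 * N
      · -- (1,1) : pump up
        have hu : u = List.replicate N (0:Fin 2) ++ List.replicate (a - N) 1 := by
          rw [hu0, slice_form N 0 a (by omega) N (a - N) 0 (by omega) (by omega) (by omega)]
          simp
        have hv : v = List.replicate b (1 : Fin 2) := by
          rw [hv0, slice_form N a b (by omega) 0 b 0 (by omega) (by omega) (by omega)]; simp
        have hx : x = List.replicate c (1 : Fin 2) := by
          rw [hx0, slice_form N (a+b) c (by omega) 0 c 0 (by omega) (by omega) (by omega)]; simp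
        have hy : y = List.replicate d (1 : Fin 2) := by
          rw [hy0, slice_form N (a+b+c) d (by omega) 0 d 0 (by omega) (by omega) (by omega)]
          simp
        have hz : z = List.replicate (2*N - (a+b+c+d)) (1:Fin 2) ++ List.replicate N 0 := by
          rw [hz0, slice_form N (a+b+c+d) e (by omega) 0 (2*N - (a+b+c+d)) N
            (by omega) (by omega) (by omega)]; simp
        have hword : u ++ v ++ v ++ x ++ y ++ y ++ z
            = List.replicate N (0:Fin 2)
            ++ List.replicate (a-N + b + b + c + d + d + (2*N - (a+b+c+d))) 1
            ++ List.replicate N 0 := by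
          rw [hu, hv, hx, hy, hz]
          simp only [List.append_assoc, rep_merge, ← List.replicate_add]
        rw [hword] at hm2
        have := L_elim hm2
        omega
      · by_cases hyp0 : 2 * N ≤ a + b + c
        · -- (1,0) : pump up
          have hu : u = List.replicate N (0:Fin 2) ++ List.replicate (a - N) 1 := by
            rw [hu0, slice_form N 0 a (by omega) N (a - N) 0 (by omega) (by omega) (by omega)]
            simp
          have hv : v = List.replicate b (1 : Fin 2) := by
            rw [hv0, slice_form N a b (by omega) 0 b 0 (by omega) (by omega) (by omega)]; simp
          have hx : x = List.replicate (2*N - (a+b)) (1:Fin 2)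
              ++ List.replicate (a+b+c - 2*N) 0 := by
            rw [hx0, slice_form N (a+b) c (by omega) 0 (2*N - (a+b)) (a+b+c-2*N)
              (by omega) (by omega) (by omega)]; simp
          have hy : y = List.replicate d (0 : Fin 2) := by
            rw [hy0, slice_form N (a+b+c) d (by omega) 0 0 d (by omega) (by omega) (by omega)]
            simp
          have hz : z = List.replicate (3*N - (a+b+c+d)) (0:Fin 2) := by
            rw [hz0, slice_form N (a+b+c+d) e (by omega) 0 0 (3*N - (a+b+c+d))
              (by omega) (by omega) (by omega)]; simp
          have hword : u ++ v ++ v ++ x ++ y ++ y ++ z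
              = List.replicate N (0:Fin 2)
              ++ List.replicate (a-N + b + b + (2*N - (a+b))) 1
              ++ List.replicate (a+b+c-2*N + d + d + (3*N - (a+b+c+d))) 0 := by
            rw [hu, hv, hx, hy, hz]
            simp only [List.append_assoc, rep_merge, ← List.replicate_add]
          rw [hword] at hm2
          have := L_elim hm2
          omega
        · -- (1, span) : y spans the 1/0 boundary
          have hy : y = List.replicate (2*N - (a+b+c)) (1:Fin 2)
              ++ List.replicate (a+b+c+d - 2*N) 0 := by
            rw [hy0, slice_form N (a+b+c) d (by omega) 0 (2*N - (a+b+c)) (a+b+c+d-2*N)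
              (by omega) (by omega) (by omega)]; simp
          have hsub : ([1,0,1] : List (Fin 2)).Sublist (u ++ v ++ v ++ x ++ y ++ y ++ z) := by
            have h1 : ([1,0,1] : List (Fin 2)).Sublist (y ++ y) := by
              rw [hy]
              exact sub101b (by omega) (by omega)
            have h2 : (y ++ y).Sublist (u ++ v ++ v ++ x ++ y ++ y ++ z) := by
              have e1 : u ++ v ++ v ++ x ++ y ++ y ++ z
                  = (u ++ (v ++ (v ++ x))) ++ ((y ++ y) ++ z) := by
                simp [List.append_assoc]
              rw [e1]
              exact ((List.sublist_append_left (y ++ y) z).trans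
                (List.sublist_append_right _ _))
            exact h1.trans h2
          exact not101 hm2 hsub
    · by_cases hvp0 : 2 * N ≤ a
      · -- (0,0) in last block : pump up
        have hu : u = List.replicate N (0:Fin 2) ++ List.replicate N 1
            ++ List.replicate (a - 2*N) 0 := by
          rw [hu0, slice_form N 0 a (by omega) N N (a - 2*N) (by omega) (by omega) (by omega)]
        have hv : v = List.replicate b (0 : Fin 2) := by
          rw [hv0, slice_form N a b (by omega) 0 0 b (by omega) (by omega) (by omega)]; simp
        have hx : x = List.replicate c (0 : Fin 2) := by
          rw [hx0, slice_form N (a+b) c (by omega) 0 0 c (by omega) (by omega) (by omega)]; simp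
        have hy : y = List.replicate d (0 : Fin 2) := by
          rw [hy0, slice_form N (a+b+c) d (by omega) 0 0 d (by omega) (by omega) (by omega)]
          simp
        have hz : z = List.replicate (3*N - (a+b+c+d)) (0:Fin 2) := by
          rw [hz0, slice_form N (a+b+c+d) e (by omega) 0 0 (3*N - (a+b+c+d))
            (by omega) (by omega) (by omega)]; simp
        have hword : u ++ v ++ v ++ x ++ y ++ y ++ z
            = List.replicate N (0:Fin 2)
            ++ List.replicate N 1
            ++ List.replicate (a-2*N + b + b + c + d + d + (3*N - (a+b+c+d))) 0 := by
          rw [hu, hv, hx, hy, hz]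
          simp only [List.append_assoc, rep_merge, ← List.replicate_add]
        rw [hword] at hm2
        have := L_elim hm2
        omega
      · -- (span, _) at the 1/0 boundary
        have hv : v = List.replicate (2*N - a) (1:Fin 2)
            ++ List.replicate (a+b-2*N) 0 := by
          rw [hv0, slice_form N a b (by omega) 0 (2*N - a) (a+b-2*N)
            (by omega) (by omega) (by omega)]; simp
        have hsub : ([1,0,1] : List (Fin 2)).Sublist (u ++ v ++ v ++ x ++ y ++ y ++ z) := by
          have h1 : ([1,0,1] : List (Fin 2)).Sublist (v ++ v) := by
            rw [hv]
            exact sub101b (by omega) (by omega)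
          have h2 : (v ++ v).Sublist (u ++ v ++ v ++ x ++ y ++ y ++ z) := by
            have e1 : u ++ v ++ v ++ x ++ y ++ y ++ z
                = u ++ ((v ++ v) ++ (x ++ (y ++ (y ++ z)))) := by
              simp [List.append_assoc]
            rw [e1]
            exact ((List.sublist_append_left (v ++ v) _).trans
              (List.sublist_append_right u _))
          exact h1.trans h2
        exact not101 hm2 hsub
end
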